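/- arXiv:2411.19600 — 3 statements merged into one kernel-verified Lean document; each statement's English description precedes it below -/
import Mathlib

section
/- Let M ∈ ℕ, let (Z_n)_{n∈ℕ} be i.i.d. uniform random variables on [−1/(2M), 1/(2M)), let y_n = {n/M} − 1/(2M) (fractional part), and set X_n = y_n + Z_n (mod 1). Then for every s > 0, lim_{k→∞} E[R(s, kM)] = 2s. -/
open MeasureTheory ProbabilityTheory Filter
open scoped ENNReal

/-- Distance of a real number to its nearest integer. -/
noncomputable def distToInt (x : ℝ) : ℝ := |x - round x|

open Classical in
/-- Number of ordered pairs `(i, j)` with `1 ≤ i ≠ j ≤ N` and `‖x i - x j‖ ≤ δ`. -/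
noncomputable def pairCount (x : ℕ → ℝ) (δ : ℝ) (N : ℕ) : ℕ :=
  ((Finset.Icc 1 N ×ˢ Finset.Icc 1 N).filter fun p =>
    p.1 ≠ p.2 ∧ distToInt (x p.1 - x p.2) ≤ δ).card

/-- The pair correlation statistic `R(s, N)`. -/
noncomputable def Rpair (x : ℕ → ℝ) (s : ℝ) (N : ℕ) : ℝ :=
  (pairCount x (s / N) N : ℝ) / N

/-- The weak pair correlation statistic `R_α(s, N)`. -/
noncomputable def Ralpha (x : ℕ → ℝ) (α s : ℝ) (N : ℕ) : ℝ :=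
  (pairCount x (s / (N : ℝ) ^ α) N : ℝ) / (N : ℝ) ^ (2 - α)

lemma distToInt_le (x : ℝ) (z : ℤ) : distToInt x ≤ |x - z| := round_le x z

lemma distToInt_add_int (x : ℝ) (z : ℤ) : distToInt (x + z) = distToInt x := by
  unfold distToInt
  rw [round_add_intCast]
  push_cast
  ring_nf

lemma distToInt_eq_norm (x : ℝ) : distToInt x = ‖(x : UnitAddCircle)‖ :=
  UnitAddCircle.norm_eq.symm

lemma distToInt_neg (x : ℝ) : distToInt (-x) = distToInt x := by
  rw [distToInt_eq_norm, distToInt_eq_norm]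
  rw [show ((-x : ℝ) : UnitAddCircle) = -(x : UnitAddCircle) from AddCircle.coe_neg 1]
  exact norm_neg _

lemma measurable_distToInt : Measurable distToInt := by
  have h1 : Measurable (round : ℝ → ℤ) := by
    have : (round : ℝ → ℤ) = fun x => ⌊x + 1/2⌋ := by funext x; exact round_eq x
    rw [this]
    exact Int.measurable_floor.comp (measurable_id.add_const _)
  have h2 : Measurable fun x : ℝ => ((round x : ℤ) : ℝ) :=
    measurable_from_top.comp h1
  exact (measurable_id.sub h2).abs

lemma volume_distToInt_Ioc (b c : ℝ) {ε : ℝ} (hε0 : 0 ≤ ε) (hε : ε ≤ 1/2) :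
    volume {t : ℝ | t ∈ Set.Ioc b (b+1) ∧ distToInt (t + c) ≤ ε} = ENNReal.ofReal (2*ε) := by
  have hD : {t : ℝ | distToInt (t + c) ≤ ε}
      = ((↑) : ℝ → UnitAddCircle) ⁻¹' (Metric.closedBall (↑(-c) : UnitAddCircle) ε) := by
    ext t
    simp only [Set.mem_setOf_eq, Set.mem_preimage, Metric.mem_closedBall, dist_eq_norm]
    rw [distToInt_eq_norm]
    congr 1
    rw [show t + c = t - (-c) by ring, AddCircle.coe_sub]
  have hset : {t : ℝ | t ∈ Set.Ioc b (b+1) ∧ distToInt (t + c) ≤ ε}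
      = ((↑) : ℝ → UnitAddCircle) ⁻¹' (Metric.closedBall (↑(-c) : UnitAddCircle) ε)
        ∩ Set.Ioc b (b+1) := by
    rw [← hD]; ext t; simp [and_comm]
  rw [hset, ← Measure.restrict_apply₀']
  · rw [(UnitAddCircle.measurePreserving_mk b).measure_preimage
      measurableSet_closedBall.nullMeasurableSet]
    rw [AddCircle.volume_closedBall]
    congr 1
    rw [min_eq_right]
    linarith
  · exact measurableSet_Ioc.nullMeasurableSet

lemma volume_distToInt_Ico (b c : ℝ) {ε : ℝ} (hε0 : 0 ≤ ε) (hε : ε ≤ 1/2) :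
    volume {t : ℝ | t ∈ Set.Ico b (b+1) ∧ distToInt (t + c) ≤ ε} = ENNReal.ofReal (2*ε) := by
  set A := {t : ℝ | t ∈ Set.Ico b (b+1) ∧ distToInt (t + c) ≤ ε} with hA
  set B := {t : ℝ | t ∈ Set.Ioc b (b+1) ∧ distToInt (t + c) ≤ ε} with hB
  rw [← volume_distToInt_Ioc b c hε0 hε]
  apply le_antisymm
  · have hsub : A ⊆ B ∪ {b} := by
      rintro t ⟨⟨h1, h2⟩, h3⟩
      rcases eq_or_lt_of_le h1 with h | h
      · exact Or.inr (by simp [← h])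
      · exact Or.inl ⟨⟨h, by linarith⟩, h3⟩
    calc volume A ≤ volume (B ∪ {b}) := measure_mono hsub
      _ ≤ volume B + volume {b} := measure_union_le _ _
      _ = volume B := by simp [Real.volume_singleton]
  · have hsub : B ⊆ A ∪ {b+1} := by
      rintro t ⟨⟨h1, h2⟩, h3⟩
      rcases eq_or_lt_of_le h2 with h | h
      · exact Or.inr (by simp [h])
      · exact Or.inl ⟨⟨by linarith, h⟩, h3⟩
    calc volume B ≤ volume (A ∪ {b+1}) := measure_mono hsub
      _ ≤ volume A + volume {b+1} := measure_union_le _ _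
      _ = volume A := by simp [Real.volume_singleton]

lemma volume_inner (M : ℕ) (hM : 0 < M) (c : ℝ) {ε : ℝ} (hε0 : 0 ≤ ε) (hε : ε ≤ 1/2) :
    volume {v : ℝ | v ∈ Set.Ico (-(1/(2*(M:ℝ)))) (1/(2*(M:ℝ))) ∧ distToInt (c - (M:ℝ)*v) ≤ ε}
      = ENNReal.ofReal (2*ε/(M:ℝ)) := by
  have hM0 : (0:ℝ) < (M:ℝ) := by exact_mod_cast hM
  have key : (M:ℝ) * (1/(2*(M:ℝ))) = 1/2 := by field_simp
  have hpre : {v : ℝ | v ∈ Set.Ico (-(1/(2*(M:ℝ)))) (1/(2*(M:ℝ))) ∧ distToInt (c - (M:ℝ)*v) ≤ ε}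
      = (fun v : ℝ => (M:ℝ) * v) ⁻¹'
        {t : ℝ | t ∈ Set.Ico (-(1/2):ℝ) (-(1/2) + 1) ∧ distToInt (t + (-c)) ≤ ε} := by
    ext v
    simp only [Set.mem_preimage, Set.mem_setOf_eq, Set.mem_Ico]
    constructor
    · rintro ⟨⟨h1, h2⟩, h3⟩
      have e1 := mul_le_mul_of_nonneg_left h1 hM0.le
      have e2 := mul_lt_mul_of_pos_left h2 hM0
      refine ⟨⟨by nlinarith, by nlinarith⟩, ?_⟩
      rw [show (M:ℝ)*v + -c = -(c - (M:ℝ)*v) by ring, distToInt_neg]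
      exact h3
    · rintro ⟨⟨h1, h2⟩, h3⟩
      constructor
      · constructor
        · by_contra hcon
          push_neg at hcon
          have := mul_lt_mul_of_pos_left hcon hM0
          nlinarith
        · by_contra hcon
          push_neg at hcon
          have := mul_le_mul_of_nonneg_left hcon hM0.le
          nlinarith
      · rw [show c - (M:ℝ)*v = -((M:ℝ)*v + -c) by ring, distToInt_neg]
        exact h3
  rw [hpre, Real.volume_preimage_mul_left (ne_of_gt hM0),
    volume_distToInt_Ico (-(1/2):ℝ) (-c) hε0 hε,
    ← ENNReal.ofReal_mul (abs_nonneg _)]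
  congr 1
  rw [abs_of_pos (inv_pos.mpr hM0)]
  field_simp

lemma cover_iff (M : ℕ) (hM : 0 < M) (w δ : ℝ) (hδ0 : 0 ≤ δ) :
    distToInt ((M:ℝ)*w) ≤ (M:ℝ)*δ
      ↔ ∃ d ∈ Finset.range M, distToInt ((d:ℝ)/(M:ℝ) + w) ≤ δ := by
  have hM0 : (0:ℝ) < (M:ℝ) := by exact_mod_cast hM
  constructor
  · intro h
    unfold distToInt at h
    set m : ℤ := round ((M:ℝ)*w) with hm
    set d : ℤ := (-m) % M with hd
    have hd0 : 0 ≤ d := Int.emod_nonneg _ (by exact_mod_cast hM.ne')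
    have hdM : d < M := Int.emod_lt_of_pos _ (by exact_mod_cast hM)
    set k : ℤ := -((-m) / M) with hk
    have hMk : (M:ℤ) * k = m + d := by
      rw [hk, hd, Int.emod_def]
      ring
    refine ⟨d.toNat, Finset.mem_range.mpr (by omega), ?_⟩
    have hcast : ((d.toNat : ℕ) : ℝ) = (d : ℝ) := by
      exact_mod_cast Int.toNat_of_nonneg hd0
    rw [hcast]
    refine le_trans (distToInt_le _ k) ?_
    have hMkr : (M:ℝ) * (k:ℝ) = (m:ℝ) + (d:ℝ) := by exact_mod_cast hMk
    have e : (d:ℝ)/(M:ℝ) + w - (k:ℝ) = ((M:ℝ)*w - (m:ℝ))/(M:ℝ) := by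
      field_simp
      linarith
    rw [e, abs_div, abs_of_pos hM0, div_le_iff₀ hM0]
    linarith [h]
  · rintro ⟨d, hdmem, h⟩
    unfold distToInt at h
    set k : ℤ := round ((d:ℝ)/(M:ℝ) + w) with hk
    refine le_trans (distToInt_le _ ((M:ℤ)*k - d)) ?_
    have e : (M:ℝ)*w - (((M:ℤ)*k - (d:ℕ) : ℤ) : ℝ)
        = (M:ℝ) * ((d:ℝ)/(M:ℝ) + w - (k:ℝ)) := by
      push_cast
      field_simp
      ring
    rw [e, abs_mul, abs_of_pos hM0]
    exact mul_le_mul_of_nonneg_left h hM0.le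

lemma disj_aux (M : ℕ) (hM : 0 < M) {δ : ℝ} (hδ : 2*(M:ℝ)*δ < 1)
    {d d' : ℕ} (hd : d < M) (hd' : d' < M) (hne : d ≠ d') (w : ℝ)
    (h : distToInt ((d:ℝ)/(M:ℝ) + w) ≤ δ) (h' : distToInt ((d':ℝ)/(M:ℝ) + w) ≤ δ) :
    False := by
  have hM0 : (0:ℝ) < (M:ℝ) := by exact_mod_cast hM
  unfold distToInt at h h'
  set k : ℤ := round ((d:ℝ)/(M:ℝ) + w) with hk
  set k' : ℤ := round ((d':ℝ)/(M:ℝ) + w) with hk'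
  set n : ℤ := (d:ℤ) - (d':ℤ) - M*(k - k') with hn
  have e : ((n:ℤ):ℝ) = (M:ℝ)*(((d:ℝ)/(M:ℝ) + w - (k:ℝ)) - ((d':ℝ)/(M:ℝ) + w - (k':ℝ))) := by
    have e0 : ((n:ℤ):ℝ) = (d:ℝ) - (d':ℝ) - (M:ℝ)*((k:ℝ) - (k':ℝ)) := by
      rw [hn]; push_cast; ring
    rw [e0]
    field_simp
    ring
  have habs : |(n:ℝ)| < 1 := by
    rw [e, abs_mul, abs_of_pos hM0]
    calc (M:ℝ) * |((d:ℝ)/(M:ℝ) + w - (k:ℝ)) - ((d':ℝ)/(M:ℝ) + w - (k':ℝ))|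
        ≤ (M:ℝ) * (|(d:ℝ)/(M:ℝ) + w - (k:ℝ)| + |(d':ℝ)/(M:ℝ) + w - (k':ℝ)|) := by
          exact mul_le_mul_of_nonneg_left (abs_sub _ _) hM0.le
      _ ≤ (M:ℝ) * (δ + δ) := by
          exact mul_le_mul_of_nonneg_left (add_le_add h h') hM0.le
      _ < 1 := by linarith
  have hn0 : n = 0 := by
    rw [← Int.abs_lt_one_iff]
    exact_mod_cast (by rw [← Int.cast_abs] at habs; exact_mod_cast habs : ((|n| : ℤ) : ℝ) < 1)
  have h5 : (d:ℤ) - (d':ℤ) = M*(k - k') := by omega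
  have h6 : (d:ℤ) - d' = 0 := by
    refine Int.eq_zero_of_abs_lt_dvd ⟨k - k', h5⟩ ?_
    rw [abs_lt]
    omega
  omega

noncomputable def muM (M : ℕ) : Measure ℝ :=
  (M : ℝ≥0∞) • volume.restrict (Set.Ico (-(1/(2*(M:ℝ)))) (1/(2*(M:ℝ))))

lemma muM_prob (M : ℕ) (hM : 0 < M) : IsProbabilityMeasure (muM M) := by
  constructor
  rw [muM, Measure.smul_apply, Measure.restrict_apply_univ, Real.volume_Ico, smul_eq_mul]
  have h1 : (1/(2*(M:ℝ)) - -(1/(2*(M:ℝ)))) = ((M:ℝ))⁻¹ := by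
    have hM0 : (0:ℝ) < (M:ℝ) := by exact_mod_cast hM
    rw [eq_comm, inv_eq_iff_eq_inv, eq_comm]
    field_simp
    ring
  rw [h1, ENNReal.ofReal_inv_of_pos (by exact_mod_cast hM), ENNReal.ofReal_natCast]
  exact ENNReal.mul_inv_cancel (by exact_mod_cast hM.ne') (ENNReal.natCast_ne_top M)

lemma measurable_pairSet (c δ : ℝ) :
    MeasurableSet {p : ℝ × ℝ | distToInt (c + (p.1 - p.2)) ≤ δ} :=
  measurableSet_le
    (measurable_distToInt.comp ((measurable_fst.sub measurable_snd).const_add c))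
    measurable_const

lemma prod_measure_ball (M : ℕ) (hM : 0 < M) {ε : ℝ} (hε0 : 0 ≤ ε) (hε : ε ≤ 1/2) :
    ((muM M).prod (muM M)) {p : ℝ × ℝ | distToInt ((M:ℝ)*(p.1 - p.2)) ≤ ε}
      = ENNReal.ofReal (2*ε) := by
  have hprob : IsProbabilityMeasure (muM M) := muM_prob M hM
  have hM0 : (0:ℝ) < (M:ℝ) := by exact_mod_cast hM
  have hSm : MeasurableSet {p : ℝ × ℝ | distToInt ((M:ℝ)*(p.1 - p.2)) ≤ ε} :=
    measurableSet_le
      (measurable_distToInt.comp ((measurable_fst.sub measurable_snd).const_mul _))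
      measurable_const
  rw [Measure.prod_apply hSm]
  have hinner : ∀ u : ℝ,
      muM M (Prod.mk u ⁻¹' {p : ℝ × ℝ | distToInt ((M:ℝ)*(p.1 - p.2)) ≤ ε})
        = ENNReal.ofReal (2*ε) := by
    intro u
    have hpre : Prod.mk u ⁻¹' {p : ℝ × ℝ | distToInt ((M:ℝ)*(p.1 - p.2)) ≤ ε}
        = {v : ℝ | distToInt ((M:ℝ)*u - (M:ℝ)*v) ≤ ε} := by
      ext v
      simp only [Set.mem_preimage, Set.mem_setOf_eq, mul_sub]
    have hAm : MeasurableSet {v : ℝ | distToInt ((M:ℝ)*u - (M:ℝ)*v) ≤ ε} :=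
      measurableSet_le
        (measurable_distToInt.comp ((measurable_id.const_mul _).const_sub _))
        measurable_const
    rw [hpre, muM, Measure.smul_apply, Measure.restrict_apply hAm, smul_eq_mul]
    have hint : {v : ℝ | distToInt ((M:ℝ)*u - (M:ℝ)*v) ≤ ε}
          ∩ Set.Ico (-(1/(2*(M:ℝ)))) (1/(2*(M:ℝ)))
        = {v : ℝ | v ∈ Set.Ico (-(1/(2*(M:ℝ)))) (1/(2*(M:ℝ)))
            ∧ distToInt ((M:ℝ)*u - (M:ℝ)*v) ≤ ε} := by
      ext v
      simp only [Set.mem_inter_iff, Set.mem_setOf_eq]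
      tauto
    rw [hint, volume_inner M hM ((M:ℝ)*u) hε0 hε,
      ← ENNReal.ofReal_natCast, ← ENNReal.ofReal_mul (by positivity)]
    congr 1
    field_simp
  simp_rw [hinner]
  rw [lintegral_const, measure_univ, mul_one]

lemma sum_shift (M : ℕ) (hM : 0 < M) {δ : ℝ} (hδ0 : 0 ≤ δ) (hδ : 2*(M:ℝ)*δ < 1) :
    ∑ d ∈ Finset.range M,
        ((muM M).prod (muM M)) {p : ℝ × ℝ | distToInt ((d:ℝ)/(M:ℝ) + (p.1 - p.2)) ≤ δ}
      = ENNReal.ofReal (2*(M:ℝ)*δ) := by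
  have hM0 : (0:ℝ) < (M:ℝ) := by exact_mod_cast hM
  have hdisj : (↑(Finset.range M) : Set ℕ).PairwiseDisjoint
      (fun d : ℕ => {p : ℝ × ℝ | distToInt ((d:ℝ)/(M:ℝ) + (p.1 - p.2)) ≤ δ}) := by
    intro d hdmem d' hd'mem hne
    simp only [Finset.coe_range, Set.mem_Iio] at hdmem hd'mem
    refine Set.disjoint_left.mpr ?_
    rintro p h1 h2
    exact disj_aux M hM hδ hdmem hd'mem hne _ h1 h2
  rw [← measure_biUnion_finset hdisj (fun d _ => measurable_pairSet _ _)]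
  have hunion : (⋃ d ∈ Finset.range M,
        {p : ℝ × ℝ | distToInt ((d:ℝ)/(M:ℝ) + (p.1 - p.2)) ≤ δ})
      = {p : ℝ × ℝ | distToInt ((M:ℝ)*(p.1 - p.2)) ≤ (M:ℝ)*δ} := by
    ext p
    simp only [Set.mem_iUnion, Set.mem_setOf_eq, exists_prop]
    rw [cover_iff M hM (p.1 - p.2) δ hδ0]
  rw [hunion, prod_measure_ball M hM (by positivity) (by nlinarith)]
  congr 1
  ring

lemma periodic_sum_shift {F : ℤ → ℝ} {M : ℕ} (hM : 0 < M)
    (hper : ∀ x : ℤ, F (x + M) = F x) (a : ℤ) :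
    ∑ d ∈ Finset.range M, F (a + d) = ∑ d ∈ Finset.range M, F d := by
  have key : ∀ b : ℤ, ∑ d ∈ Finset.range M, F ((b+1) + d) = ∑ d ∈ Finset.range M, F (b + d) := by
    intro b
    set G : ℕ → ℝ := fun d => F (b + d) with hG
    have h1 : ∑ d ∈ Finset.range M, F ((b+1) + d) = ∑ d ∈ Finset.range M, G (d+1) := by
      apply Finset.sum_congr rfl
      intro d _
      simp only [hG]
      congr 1
      push_cast
      ring
    have e1 := Finset.sum_range_succ' G M
    have e2 := Finset.sum_range_succ G M
    have e3 : G M = G 0 := by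
      simp only [hG, Nat.cast_zero, add_zero]
      exact hper b
    rw [h1]
    rw [e2, e3] at e1
    linarith
  induction a using Int.induction_on with
  | zero => simp
  | succ i ih => rw [key i, ih]
  | pred i ih => rw [← ih, ← key (-(i:ℤ) - 1)]; norm_num

lemma periodic_sum_blocks {F : ℤ → ℝ} {M : ℕ} (hM : 0 < M)
    (hper : ∀ x : ℤ, F (x + M) = F x) (k : ℕ) :
    ∑ t ∈ Finset.range (k*M), F t = (k : ℝ) * ∑ d ∈ Finset.range M, F d := by
  induction k with
  | zero => simp
  | succ k ih =>
    have hkM : (k+1)*M = k*M + M := by ring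
    rw [hkM, Finset.sum_range_add, ih]
    have : ∑ t ∈ Finset.range M, F ((k*M + t : ℕ)) = ∑ d ∈ Finset.range M, F d := by
      have := periodic_sum_shift hM hper ((k*M : ℕ) : ℤ)
      rw [← this]
      apply Finset.sum_congr rfl
      intro d _
      norm_cast
    rw [this]
    push_cast
    ring

lemma periodic_sum_reflect {F : ℤ → ℝ} {M : ℕ} (hM : 0 < M)
    (hper : ∀ x : ℤ, F (x + M) = F x) (a : ℤ) :
    ∑ d ∈ Finset.range M, F (a - d) = ∑ d ∈ Finset.range M, F d := by
  rw [← Finset.sum_range_reflect (fun d => F (a - d)) M]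
  have h1 : ∀ d ∈ Finset.range M, F (a - (M - 1 - d : ℕ)) = F ((a - M + 1) + d) := by
    intro d hd
    rw [Finset.mem_range] at hd
    congr 1
    have : ((M - 1 - d : ℕ) : ℤ) = (M : ℤ) - 1 - d := by omega
    rw [this]
    ring
  rw [Finset.sum_congr rfl h1, periodic_sum_shift hM hper]

/-- For the decomposed `M`-batch jittered sample `X n = {y n + Z n}` with
`y n = {n/M} - 1/(2M)` and `Z n` i.i.d. uniform on `[-1/(2M), 1/(2M))`, the
expected pair correlation statistic along batch sizes `N = kM` converges to `2s`. -/
theorem mBatchDecomposition_expectation_tendsto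
    {Ω : Type*} [MeasurableSpace Ω] (P : Measure Ω) [IsProbabilityMeasure P]
    (M : ℕ) (hM : 0 < M)
    (Z : ℕ → Ω → ℝ) (hZmeas : ∀ n, Measurable (Z n))
    (hZindep : iIndepFun Z P)
    (hZdist : ∀ n, Measure.map (Z n) P
      = (M : ℝ≥0∞) • volume.restrict (Set.Ico (-(1 / (2 * M)) : ℝ) (1 / (2 * M))))
    (X : ℕ → Ω → ℝ)
    (hX : ∀ n ω, X n ω = Int.fract (Int.fract ((n : ℝ) / M) - 1 / (2 * M) + Z n ω))
    (s : ℝ) (hs : 0 < s) :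
    Tendsto (fun k => ∫ ω, Rpair (fun n => X n ω) s (k * M) ∂P) atTop (nhds (2 * s)) := by
  classical
  have hM0 : (0:ℝ) < (M:ℝ) := by exact_mod_cast hM
  haveI hprod : IsProbabilityMeasure ((muM M).prod (muM M)) := by
    haveI := muM_prob M hM
    infer_instance
  -- measurability of X
  have hXmeas : ∀ n, Measurable (X n) := by
    intro n
    have h : X n = fun ω => Int.fract (Int.fract ((n : ℝ) / M) - 1 / (2 * M) + Z n ω) :=
      funext (hX n)
    rw [h]
    exact ((hZmeas n).const_add _).fract
  -- deterministic reduction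
  have key : ∀ a b : ℝ, distToInt (Int.fract a - Int.fract b) = distToInt (a - b) := by
    intro a b
    have h : Int.fract a - Int.fract b = (a - b) + ((⌊b⌋ - ⌊a⌋ : ℤ) : ℝ) := by
      unfold Int.fract
      push_cast
      ring
    rw [h, distToInt_add_int]
  have hdet : ∀ (i j : ℕ) (ω : Ω), distToInt (X i ω - X j ω)
      = distToInt ((((i:ℤ) - (j:ℤ) : ℤ) : ℝ)/(M:ℝ) + (Z i ω - Z j ω)) := by
    intro i j ω
    rw [hX i ω, hX j ω, key]
    have e : (Int.fract ((i : ℝ) / M) - 1 / (2 * M) + Z i ω)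
          - (Int.fract ((j : ℝ) / M) - 1 / (2 * M) + Z j ω)
        = ((((i:ℤ) - (j:ℤ) : ℤ) : ℝ)/(M:ℝ) + (Z i ω - Z j ω))
          + ((⌊(j:ℝ)/(M:ℝ)⌋ - ⌊(i:ℝ)/(M:ℝ)⌋ : ℤ) : ℝ) := by
      unfold Int.fract
      push_cast
      ring
    rw [e, distToInt_add_int]
  -- marginal and joint laws
  have hμ : ∀ n, Measure.map (Z n) P = muM M := fun n => hZdist n
  have hjoint : ∀ i j : ℕ, i ≠ j →
      Measure.map (fun ω => (Z i ω, Z j ω)) P = (muM M).prod (muM M) := by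
    intro i j hij
    have hindep : IndepFun (Z i) (Z j) P := hZindep.indepFun hij
    rw [(indepFun_iff_map_prod_eq_prod_map_map
      (hZmeas i).aemeasurable (hZmeas j).aemeasurable).mp hindep, hμ i, hμ j]
  have hPij : ∀ (δ : ℝ) (i j : ℕ), i ≠ j →
      P {ω | distToInt (X i ω - X j ω) ≤ δ}
        = ((muM M).prod (muM M))
            {p : ℝ × ℝ | distToInt ((((i:ℤ) - (j:ℤ) : ℤ) : ℝ)/(M:ℝ) + (p.1 - p.2)) ≤ δ} := by
    intro δ i j hij
    have hset : {ω | distToInt (X i ω - X j ω) ≤ δ}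
        = (fun ω => (Z i ω, Z j ω)) ⁻¹'
          {p : ℝ × ℝ | distToInt ((((i:ℤ) - (j:ℤ) : ℤ) : ℝ)/(M:ℝ) + (p.1 - p.2)) ≤ δ} := by
      ext ω
      simp only [Set.mem_setOf_eq, Set.mem_preimage]
      rw [hdet i j ω]
    rw [hset, ← Measure.map_apply ((hZmeas i).prodMk (hZmeas j)) (measurable_pairSet _ _),
      hjoint i j hij]
  -- main formula for large k
  have hform : ∀ k : ℕ, 2*s < (k:ℝ) →
      ∫ ω, Rpair (fun n => X n ω) s (k * M) ∂P
        = 2*s - (((muM M).prod (muM M))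
            {p : ℝ × ℝ | distToInt (((0:ℤ):ℝ)/(M:ℝ) + (p.1 - p.2)) ≤ s/((k*M : ℕ):ℝ)}).toReal
      ∧ 0 ≤ (((muM M).prod (muM M))
            {p : ℝ × ℝ | distToInt (((0:ℤ):ℝ)/(M:ℝ) + (p.1 - p.2)) ≤ s/((k*M : ℕ):ℝ)}).toReal
      ∧ (((muM M).prod (muM M))
            {p : ℝ × ℝ | distToInt (((0:ℤ):ℝ)/(M:ℝ) + (p.1 - p.2)) ≤ s/((k*M : ℕ):ℝ)}).toReal
          ≤ 2*s/(k:ℝ) := by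
    intro k hk
    have hkpos : 0 < k := by
      by_contra hcon
      push_neg at hcon
      interval_cases k
      · simp at hk; linarith
    have hkr : (0:ℝ) < (k:ℝ) := by exact_mod_cast hkpos
    set N : ℕ := k * M with hN
    have hNpos : 0 < N := Nat.mul_pos hkpos hM
    have hNr : ((N:ℕ):ℝ) = (k:ℝ)*(M:ℝ) := by rw [hN]; push_cast; ring
    have hNr0 : (0:ℝ) < (N:ℝ) := by exact_mod_cast hNpos
    set δ : ℝ := s / (N:ℝ) with hδ
    have hδ0 : 0 ≤ δ := by positivity
    have hδ2 : 2*(M:ℝ)*δ = 2*s/(k:ℝ) := by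
      rw [hδ, hNr]
      field_simp
    have hδ1 : 2*(M:ℝ)*δ < 1 := by
      rw [hδ2, div_lt_one hkr]
      linarith
    set g : ℤ → ℝ := fun m =>
      (((muM M).prod (muM M))
        {p : ℝ × ℝ | distToInt ((m:ℝ)/(M:ℝ) + (p.1 - p.2)) ≤ δ}).toReal with hg
    have hgper : ∀ x : ℤ, g (x + M) = g x := by
      intro x
      simp only [hg]
      congr 2
      ext p
      simp only [Set.mem_setOf_eq]
      have e : ((x + M : ℤ):ℝ)/(M:ℝ) + (p.1 - p.2)
          = (((x:ℤ):ℝ)/(M:ℝ) + (p.1 - p.2)) + ((1:ℤ):ℝ) := by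
        push_cast
        field_simp
        ring
      rw [e, distToInt_add_int]
    have hSd : ∑ d ∈ Finset.range M, g (d : ℤ) = 2*(M:ℝ)*δ := by
      have h1 := sum_shift M hM hδ0 hδ1
      have h2 : ∑ d ∈ Finset.range M, g (d:ℤ)
          = (∑ d ∈ Finset.range M, ((muM M).prod (muM M))
              {p : ℝ × ℝ | distToInt (((d:ℕ):ℝ)/(M:ℝ) + (p.1 - p.2)) ≤ δ}).toReal := by
        rw [ENNReal.toReal_sum (fun a _ => measure_ne_top _ _)]
        apply Finset.sum_congr rfl
        intro d _
        simp only [hg, Int.cast_natCast]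
      rw [h2, h1, ENNReal.toReal_ofReal (by positivity)]
    have hgnn : ∀ m : ℤ, 0 ≤ g m := fun m => ENNReal.toReal_nonneg
    have hg0le : g 0 ≤ 2*(M:ℝ)*δ := by
      rw [← hSd]
      have h0mem : (0:ℕ) ∈ Finset.range M := Finset.mem_range.mpr hM
      have h := Finset.single_le_sum (f := fun d : ℕ => g (d:ℤ)) (fun i _ => hgnn _) h0mem
      simpa using h
    set T' := (Finset.Icc 1 N ×ˢ Finset.Icc 1 N).filter (fun p : ℕ × ℕ => p.1 ≠ p.2) with hT'
    have hcount : ∀ ω, (pairCount (fun n => X n ω) δ N : ℝ)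
        = ∑ p ∈ T', (if distToInt (X p.1 ω - X p.2 ω) ≤ δ then (1:ℝ) else 0) := by
      intro ω
      have h0 : pairCount (fun n => X n ω) δ N
          = ∑ p ∈ Finset.Icc 1 N ×ˢ Finset.Icc 1 N,
              (if p.1 ≠ p.2 ∧ distToInt (X p.1 ω - X p.2 ω) ≤ δ then 1 else 0) := by
        unfold pairCount
        rw [Finset.card_filter]
      rw [h0, hT', Finset.sum_filter]
      push_cast
      apply Finset.sum_congr rfl
      intro p _
      by_cases h1 : p.1 = p.2 <;> by_cases h2 : distToInt (X p.1 ω - X p.2 ω) ≤ δ <;>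
        simp [h1, h2]
    have hAmes : ∀ p : ℕ × ℕ, MeasurableSet {ω | distToInt (X p.1 ω - X p.2 ω) ≤ δ} := fun p =>
      measurableSet_le (measurable_distToInt.comp ((hXmeas p.1).sub (hXmeas p.2)))
        measurable_const
    have hind : ∀ p : ℕ × ℕ,
        (fun ω => if distToInt (X p.1 ω - X p.2 ω) ≤ δ then (1:ℝ) else 0)
          = Set.indicator {ω | distToInt (X p.1 ω - X p.2 ω) ≤ δ} (fun _ => (1:ℝ)) := by
      intro p
      funext ω
      rw [Set.indicator_apply]
      simp only [Set.mem_setOf_eq]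
    have hint : ∫ ω, Rpair (fun n => X n ω) s N ∂P
        = (∑ p ∈ T', (P {ω | distToInt (X p.1 ω - X p.2 ω) ≤ δ}).toReal) / (N:ℝ) := by
      have hre : (fun ω => Rpair (fun n => X n ω) s N)
          = fun ω => (∑ p ∈ T',
              (if distToInt (X p.1 ω - X p.2 ω) ≤ δ then (1:ℝ) else 0)) / (N:ℝ) := by
        funext ω
        unfold Rpair
        rw [← hδ, hcount ω]
      rw [hre, integral_div, integral_finset_sum]
      · congr 1
        apply Finset.sum_congr rfl
        intro p _
        rw [hind p, integral_indicator_const (1:ℝ) (hAmes p), smul_eq_mul, mul_one]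
        rfl
      · intro p _
        rw [hind p]
        exact (integrable_const (1:ℝ)).indicator (hAmes p)
    have hsum : ∑ p ∈ T', (P {ω | distToInt (X p.1 ω - X p.2 ω) ≤ δ}).toReal
        = (N:ℝ) * ((k:ℝ) * (∑ d ∈ Finset.range M, g (d:ℤ)) - g 0) := by
      have h1 : ∀ p ∈ T', (P {ω | distToInt (X p.1 ω - X p.2 ω) ≤ δ}).toReal
          = g ((p.1:ℤ) - (p.2:ℤ)) := by
        intro p hp
        rw [hT', Finset.mem_filter] at hp
        rw [hPij δ p.1 p.2 hp.2]
      rw [Finset.sum_congr rfl h1, hT', Finset.sum_filter, Finset.sum_product]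
      have hinner : ∀ i ∈ Finset.Icc 1 N,
          (∑ j ∈ Finset.Icc 1 N, if (i, j).1 ≠ (i, j).2 then g ((i:ℤ) - (j:ℤ)) else 0)
            = (k:ℝ) * (∑ d ∈ Finset.range M, g (d:ℤ)) - g 0 := by
        intro i hi
        have e1 : ∀ j ∈ Finset.Icc 1 N, (if (i, j).1 ≠ (i, j).2 then g ((i:ℤ) - (j:ℤ)) else 0)
            = g ((i:ℤ) - (j:ℤ)) - (if i = j then g ((i:ℤ) - (j:ℤ)) else 0) := by
          intro j _
          by_cases h : i = j <;> simp [h]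
        rw [Finset.sum_congr rfl e1, Finset.sum_sub_distrib]
        have e2 : ∑ j ∈ Finset.Icc 1 N, (if i = j then g ((i:ℤ) - (j:ℤ)) else 0) = g 0 := by
          rw [Finset.sum_ite_eq]
          simp [hi]
        have e3 : ∑ j ∈ Finset.Icc 1 N, g ((i:ℤ) - (j:ℤ))
            = (k:ℝ) * ∑ d ∈ Finset.range M, g (d:ℤ) := by
          have hIcc : Finset.Icc 1 N = Finset.Ico 1 (N+1) := by rw [Finset.Ico_add_one_right_eq_Icc]
          rw [hIcc, Finset.sum_Ico_eq_sum_range]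
          have hsimp : N + 1 - 1 = N := by omega
          rw [hsimp]
          have hperF : ∀ x : ℤ, g ((i:ℤ) - 1 - (x + M)) = g ((i:ℤ) - 1 - x) := by
            intro x
            have h := hgper ((i:ℤ) - 1 - x - (M:ℤ))
            rw [show (i:ℤ) - 1 - x - (M:ℤ) + (M:ℤ) = (i:ℤ) - 1 - x by ring] at h
            rw [show (i:ℤ) - 1 - (x + (M:ℤ)) = (i:ℤ) - 1 - x - (M:ℤ) by ring]
            exact h.symm
          have e4 : ∀ t ∈ Finset.range N, g ((i:ℤ) - ((1 + t : ℕ):ℤ))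
              = g ((i:ℤ) - 1 - (t:ℤ)) := by
            intro t _
            congr 1
            push_cast
            ring
          have e5 : ∑ x ∈ Finset.range (k*M), g ((i:ℤ) - 1 - (x:ℤ))
              = (k:ℝ) * ∑ d ∈ Finset.range M, g ((i:ℤ) - 1 - (d:ℤ)) :=
            periodic_sum_blocks (F := fun x : ℤ => g ((i:ℤ) - 1 - x)) hM hperF k
          have e6 : ∑ d ∈ Finset.range M, g ((i:ℤ) - 1 - (d:ℤ))
              = ∑ d ∈ Finset.range M, g (d:ℤ) :=
            periodic_sum_reflect hM hgper ((i:ℤ) - 1)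
          rw [Finset.sum_congr rfl e4, hN, e5, e6]
        rw [e3, e2]
      rw [Finset.sum_congr rfl hinner, Finset.sum_const, Nat.card_Icc]
      have : N + 1 - 1 = N := by omega
      rw [this, nsmul_eq_mul]
    have hgoal0 : (((muM M).prod (muM M))
        {p : ℝ × ℝ | distToInt (((0:ℤ):ℝ)/(M:ℝ) + (p.1 - p.2)) ≤ δ}).toReal = g 0 := by
      simp only [hg]
    have hfinal : ∫ ω, Rpair (fun n => X n ω) s N ∂P = 2*s - g 0 := by
      rw [hint, hsum, hSd]
      have hks : (k:ℝ) * (2*(M:ℝ)*δ) = 2*s := by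
        rw [hδ2]
        field_simp
      rw [hks]
      field_simp
    refine ⟨?_, ENNReal.toReal_nonneg, ?_⟩
    · rw [hfinal, hgoal0]
    · rw [hgoal0, ← hδ2]
      exact hg0le
  -- conclude
  have hk0 : ∀ᶠ k : ℕ in atTop, 2*s < (k:ℝ) := by
    have := eventually_gt_atTop (⌈2*s⌉₊)
    filter_upwards [this] with k hk
    calc 2*s ≤ (⌈2*s⌉₊ : ℝ) := Nat.le_ceil _
      _ < (k:ℝ) := by exact_mod_cast hk
  apply tendsto_of_tendsto_of_tendsto_of_le_of_le'
    (g := fun k : ℕ => 2*s - 2*s/(k:ℝ)) (h := fun _ : ℕ => 2*s)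
  · have h1 : Tendsto (fun k : ℕ => 2*s/(k:ℝ)) atTop (nhds 0) :=
      tendsto_const_div_atTop_nhds_zero_nat (2*s)
    have h2 : Tendsto (fun _ : ℕ => 2*s) atTop (nhds (2*s)) := tendsto_const_nhds
    simpa using h2.sub h1
  · exact tendsto_const_nhds
  · filter_upwards [hk0] with k hk
    obtain ⟨he, h0, hb⟩ := hform k hk
    rw [he]
    linarith
  · filter_upwards [hk0] with k hk
    obtain ⟨he, h0, hb⟩ := hform k hk
    rw [he]
    linarith
end

section
/- Let M ∈ ℕ, let (Z_n)_{n∈ℕ} be i.i.d. uniform random variables on [−1/(2M), 1/(2M)), let y_n = {n/M} − 1/(2M) (fractional part), and set X_n = y_n + Z_n (mod 1). Then for every s > 0 there is a constant C (depending on s and M) such that for all N of the form N = kM, Var(R(s,N)) ≤ C/N. -/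
open MeasureTheory ProbabilityTheory Filter
open scoped ENNReal

namespace JitterAux

lemma measurable_distToInt : Measurable distToInt := by
  have h : Measurable fun x : ℝ => (round x : ℝ) := by
    have h2 : Measurable (round : ℝ → ℤ) := by
      have : (round : ℝ → ℤ) = fun x => ⌊x + 1/2⌋ := funext round_eq
      rw [this]
      exact Int.measurable_floor.comp (measurable_id.add_const _)
    exact Measurable.comp measurable_from_top h2
  exact (measurable_id.sub h).abs

lemma distToInt_le (x : ℝ) (m : ℤ) : distToInt x ≤ |x - m| := round_le x m

lemma distToInt_neg (x : ℝ) : distToInt (-x) = distToInt x := by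
  have h1 : ∀ y : ℝ, distToInt (-y) ≤ distToInt y := by
    intro y
    have := distToInt_le (-y) (-round y)
    show distToInt (-y) ≤ |y - round y|
    simpa [abs_sub_comm, neg_add_eq_sub, ← neg_add', abs_neg] using this
  have h2 := h1 (-x)
  rw [neg_neg] at h2
  exact le_antisymm (h1 x) h2

lemma distToInt_add_int (x : ℝ) (m : ℤ) : distToInt (x + m) = distToInt x := by
  unfold distToInt
  rw [round_add_intCast]
  push_cast
  ring_nf

lemma distToInt_fract_sub_fract (u v : ℝ) :
    distToInt (Int.fract u - Int.fract v) = distToInt (u - v) := by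
  have : Int.fract u - Int.fract v = (u - v) + (⌊v⌋ - ⌊u⌋ : ℤ) := by
    rw [Int.fract, Int.fract]; push_cast; ring
  rw [this, distToInt_add_int]

/-- The common law of each `Z n`. -/
noncomputable def nu (M : ℕ) : Measure ℝ :=
  (M : ℝ≥0∞) • volume.restrict (Set.Ico (-(1 / (2 * M)) : ℝ) (1 / (2 * M)))

lemma nu_prob (M : ℕ) (hM : 0 < M) : IsProbabilityMeasure (nu M) := by
  have hMR : (0:ℝ) < M := by exact_mod_cast hM
  have hval : (1/(2*(M:ℝ)) - (-(1/(2*M)))) = (M:ℝ)⁻¹ := by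
    rw [sub_neg_eq_add, ← add_div, inv_eq_one_div,
      show (1:ℝ)+1 = 2*1 by norm_num]
    exact mul_div_mul_left 1 (M:ℝ) two_ne_zero
  constructor
  rw [nu, Measure.smul_apply, Measure.restrict_apply MeasurableSet.univ, Set.univ_inter,
    Real.volume_Ico, hval,
    smul_eq_mul, ← ENNReal.ofReal_natCast, ← ENNReal.ofReal_mul hMR.le,
    mul_inv_cancel₀ hMR.ne', ENNReal.ofReal_one]

lemma kernel_bound (M : ℕ) (hM : 0 < M) (δ : ℝ) (hδ : 0 ≤ δ) (a : ℝ) :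
    nu M {z : ℝ | distToInt (a - z) ≤ δ} ≤ ENNReal.ofReal (4 * δ * M) := by
  have hMR : (0:ℝ) < M := by exact_mod_cast hM
  set β : ℝ := 1 / (2 * M) with hβ
  have hβpos : 0 < β := by positivity
  have hβM : β * (2 * M) = 1 := by rw [hβ]; field_simp
  have hM1 : (1:ℝ) ≤ M := by exact_mod_cast hM
  have h2β : 2 * β ≤ 1 := by nlinarith [hβpos, hβM, hM1]
  set m0 : ℤ := round (a - β) with hm0
  have hsub : {z : ℝ | distToInt (a - z) ≤ δ} ∩ Set.Ico (-β) β ⊆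
      Set.Icc (a - m0 - δ) (a - m0 + δ) ∪
      Set.Icc (a - (m0 + 1) - δ) (a - (m0 + 1) + δ) := by
    rintro z ⟨hz1, hz2⟩
    have hz2' : -β ≤ z ∧ z < β := hz2
    set m : ℤ := round (a - z) with hm
    have hmem : |a - z - m| ≤ δ := hz1
    have hmlo : m0 ≤ m := by
      rw [hm0, hm, round_eq, round_eq]
      exact Int.floor_mono (by linarith [hz2'.2])
    have hmhi : m ≤ m0 + 1 := by
      rw [hm0, hm, round_eq, round_eq]
      have : a - z + 1/2 ≤ (a - β + 1/2) + 1 := by linarith [hz2'.1]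
      calc ⌊a - z + 1/2⌋ ≤ ⌊(a - β + 1/2) + 1⌋ := Int.floor_mono this
        _ = ⌊a - β + 1/2⌋ + 1 := by rw [Int.floor_add_one]
    have habs : a - m - δ ≤ z ∧ z ≤ a - m + δ := by
      rw [abs_le] at hmem; constructor <;> linarith [hmem.1, hmem.2]
    have hcases : m = m0 ∨ m = m0 + 1 := by omega
    rcases hcases with h | h
    · left; rw [h] at habs; exact ⟨habs.1, habs.2⟩
    · right
      rw [h] at habs
      constructor
      · have := habs.1; push_cast at this ⊢; linarith
      · have := habs.2; push_cast at this ⊢; linarith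
  calc nu M {z : ℝ | distToInt (a - z) ≤ δ}
      = (M : ℝ≥0∞) * volume ({z : ℝ | distToInt (a - z) ≤ δ} ∩ Set.Ico (-β) β) := by
        rw [nu, Measure.smul_apply, Measure.restrict_apply]
        · rfl
        · exact measurableSet_le (measurable_distToInt.comp
            ((measurable_const (a := a)).sub measurable_id)) measurable_const
    _ ≤ (M : ℝ≥0∞) * (ENNReal.ofReal (2 * δ) + ENNReal.ofReal (2 * δ)) := by
        gcongr
        refine le_trans (measure_mono hsub) (le_trans (measure_union_le _ _) ?_)
        rw [Real.volume_Icc, Real.volume_Icc]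
        gcongr <;> · exact le_of_eq (by ring)
    _ ≤ ENNReal.ofReal (4 * δ * M) := by
        rw [← ENNReal.ofReal_add (by linarith) (by linarith), ← ENNReal.ofReal_natCast,
          ← ENNReal.ofReal_mul (by positivity)]
        exact ENNReal.ofReal_le_ofReal (by nlinarith)

lemma pair_bound (M : ℕ) (hM : 0 < M) (δ : ℝ) (hδ : 0 ≤ δ) (a b : ℝ) :
    ((nu M).prod (nu M)) {q : ℝ × ℝ | distToInt ((a + q.1) - (b + q.2)) ≤ δ}
      ≤ ENNReal.ofReal (4 * δ * M) := by
  have := nu_prob M hM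
  have hmeas : MeasurableSet {q : ℝ × ℝ | distToInt ((a + q.1) - (b + q.2)) ≤ δ} := by
    refine measurableSet_le (measurable_distToInt.comp ?_) measurable_const
    exact ((measurable_const.add measurable_fst).sub (measurable_const.add measurable_snd))
  rw [Measure.prod_apply hmeas]
  calc ∫⁻ x, nu M (Prod.mk x ⁻¹' {q : ℝ × ℝ | distToInt ((a + q.1) - (b + q.2)) ≤ δ}) ∂(nu M)
      ≤ ∫⁻ _, ENNReal.ofReal (4 * δ * M) ∂(nu M) := by
        refine lintegral_mono fun x => ?_
        have : (Prod.mk x ⁻¹' {q : ℝ × ℝ | distToInt ((a + q.1) - (b + q.2)) ≤ δ})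
            = {z : ℝ | distToInt ((a + x - b) - z) ≤ δ} := by
          ext z; simp only [Set.mem_preimage, Set.mem_setOf_eq]
          rw [show (a + x) - (b + z) = (a + x - b) - z by ring]
        rw [this]
        exact kernel_bound M hM δ hδ _
    _ = ENNReal.ofReal (4 * δ * M) := by rw [lintegral_const, measure_univ, mul_one]

end JitterAux

lemma pairCount_eq (x : ℕ → ℝ) (δ : ℝ) (N : ℕ) :
    pairCount x δ N = ∑ p ∈ (Finset.Icc 1 N ×ˢ Finset.Icc 1 N).filter (fun p => p.1 ≠ p.2),
      (if distToInt (x p.1 - x p.2) ≤ δ then 1 else 0) := by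
  classical
  rw [pairCount]
  rw [show ((Finset.Icc 1 N ×ˢ Finset.Icc 1 N).filter fun p =>
      p.1 ≠ p.2 ∧ distToInt (x p.1 - x p.2) ≤ δ)
    = (((Finset.Icc 1 N ×ˢ Finset.Icc 1 N).filter fun p => p.1 ≠ p.2).filter
        fun p => distToInt (x p.1 - x p.2) ≤ δ) by
      rw [Finset.filter_filter]]
  rw [Finset.card_filter]

/-- For the decomposed `M`-batch jittered sample `X n = {y n + Z n}` with
`y n = {n/M} - 1/(2M)` and `Z n` i.i.d. uniform on `[-1/(2M), 1/(2M))`, the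
variance of the pair correlation statistic at `N = kM` is `O(1/N)`. -/
theorem mBatchDecomposition_variance_le
    {Ω : Type*} [MeasurableSpace Ω] (P : Measure Ω) [IsProbabilityMeasure P]
    (M : ℕ) (hM : 0 < M)
    (Z : ℕ → Ω → ℝ) (hZmeas : ∀ n, Measurable (Z n))
    (hZindep : iIndepFun Z P)
    (hZdist : ∀ n, Measure.map (Z n) P
      = (M : ℝ≥0∞) • volume.restrict (Set.Ico (-(1 / (2 * M)) : ℝ) (1 / (2 * M))))
    (X : ℕ → Ω → ℝ)
    (hX : ∀ n ω, X n ω = Int.fract (Int.fract ((n : ℝ) / M) - 1 / (2 * M) + Z n ω))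
    (s : ℝ) (hs : 0 < s) :
    ∃ C : ℝ, ∀ k : ℕ, 1 ≤ k →
      variance (fun ω => Rpair (fun n => X n ω) s (k * M)) P ≤ C / (k * M : ℕ) := by
  classical
  refine ⟨8*s*M + 64*s^2*M^2, ?_⟩
  intro k hk
  set N : ℕ := k * M with hNdef
  have hN : 0 < N := Nat.mul_pos (by omega) hM
  have hNR : (0:ℝ) < N := by exact_mod_cast hN
  set δ : ℝ := s / N with hδdef
  have hδ : 0 ≤ δ := le_of_lt (div_pos hs hNR)
  set ν : Measure ℝ := JitterAux.nu M with hν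
  have hνprob : IsProbabilityMeasure ν := JitterAux.nu_prob M hM
  have hmap : ∀ n, Measure.map (Z n) P = ν := fun n => hZdist n
  set c : ℕ → ℝ := fun n => Int.fract ((n:ℝ)/M) - 1/(2*M) with hc
  have hXeq : ∀ n ω, X n ω = Int.fract (c n + Z n ω) := fun n ω => hX n ω
  have hXmeas : ∀ n, Measurable (X n) := by
    intro n
    rw [show X n = fun ω => Int.fract (c n + Z n ω) from funext (hXeq n)]
    exact measurable_fract.comp (measurable_const.add (hZmeas n))
  set E : ℕ → ℕ → Set Ω := fun i j => {ω | distToInt (X i ω - X j ω) ≤ δ} with hE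
  have hdist : ∀ i j ω, distToInt (X i ω - X j ω)
      = distToInt ((c i + Z i ω) - (c j + Z j ω)) := by
    intro i j ω
    rw [hXeq i ω, hXeq j ω, JitterAux.distToInt_fract_sub_fract]
  have hEmeas : ∀ i j, MeasurableSet (E i j) := fun i j =>
    measurableSet_le (JitterAux.measurable_distToInt.comp ((hXmeas i).sub (hXmeas j)))
      measurable_const
  have hEsymm : ∀ i j, E i j = E j i := by
    intro i j; ext ω
    simp only [hE, Set.mem_setOf_eq]
    rw [show X j ω - X i ω = -(X i ω - X j ω) by ring, JitterAux.distToInt_neg]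
  set Sij : ℝ → ℝ → Set (ℝ × ℝ) :=
    fun a b => {q : ℝ × ℝ | distToInt ((a + q.1) - (b + q.2)) ≤ δ} with hSij
  have hSijmeas : ∀ a b, MeasurableSet (Sij a b) := fun a b =>
    measurableSet_le (JitterAux.measurable_distToInt.comp
      ((measurable_const.add measurable_fst).sub (measurable_const.add measurable_snd)))
      measurable_const
  have hEpre : ∀ i j, E i j = (fun ω => (Z i ω, Z j ω)) ⁻¹' (Sij (c i) (c j)) := by
    intro i j; ext ω
    simp only [hE, hSij, Set.mem_setOf_eq, Set.mem_preimage]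
    rw [hdist i j ω]
  have hmap2 : ∀ i j, i ≠ j → Measure.map (fun ω => (Z i ω, Z j ω)) P = ν.prod ν := by
    intro i j hij
    rw [(indepFun_iff_map_prod_eq_prod_map_map (hZmeas i).aemeasurable
      (hZmeas j).aemeasurable).mp (hZindep.indepFun hij), hmap i, hmap j]
  have hPE : ∀ i j, i ≠ j → P (E i j) ≤ ENNReal.ofReal (4*δ*M) := by
    intro i j hij
    rw [hEpre i j, ← Measure.map_apply ((hZmeas i).prodMk (hZmeas j)) (hSijmeas _ _),
      hmap2 i j hij]
    exact JitterAux.pair_bound M hM δ hδ _ _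
  have hPtriple : ∀ i j l, i ≠ j → i ≠ l → j ≠ l →
      P (E i j ∩ E i l) ≤ ENNReal.ofReal (4*δ*M) * ENNReal.ofReal (4*δ*M) := by
    intro i j l hij hil hjl
    set T : Ω → (ℝ × ℝ) × ℝ := fun ω => ((Z i ω, Z j ω), Z l ω) with hT
    have hTmeas : Measurable T := ((hZmeas i).prodMk (hZmeas j)).prodMk (hZmeas l)
    have hmapT : Measure.map T P = (ν.prod ν).prod ν := by
      rw [(indepFun_iff_map_prod_eq_prod_map_map
        ((hZmeas i).prodMk (hZmeas j)).aemeasurable (hZmeas l).aemeasurable).mp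
        (hZindep.indepFun_prodMk hZmeas i j l hil hjl), hmap2 i j hij, hmap l]
    set S3 : Set ((ℝ × ℝ) × ℝ) := {q : (ℝ × ℝ) × ℝ |
      distToInt ((c i + q.1.1) - (c j + q.1.2)) ≤ δ ∧
      distToInt ((c i + q.1.1) - (c l + q.2)) ≤ δ} with hS3
    have hS3meas : MeasurableSet S3 := by
      have h1 : MeasurableSet {q : (ℝ × ℝ) × ℝ |
          distToInt ((c i + q.1.1) - (c j + q.1.2)) ≤ δ} :=
        measurableSet_le (JitterAux.measurable_distToInt.comp
          ((measurable_const.add (measurable_fst.comp measurable_fst)).sub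
           (measurable_const.add (measurable_snd.comp measurable_fst)))) measurable_const
      have h2 : MeasurableSet {q : (ℝ × ℝ) × ℝ |
          distToInt ((c i + q.1.1) - (c l + q.2)) ≤ δ} :=
        measurableSet_le (JitterAux.measurable_distToInt.comp
          ((measurable_const.add (measurable_fst.comp measurable_fst)).sub
           (measurable_const.add measurable_snd))) measurable_const
      rw [hS3, Set.setOf_and]
      exact h1.inter h2
    have hpreT : E i j ∩ E i l = T ⁻¹' S3 := by
      ext ω
      simp only [hE, hS3, hT, Set.mem_inter_iff, Set.mem_setOf_eq, Set.mem_preimage]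
      rw [hdist i j ω, hdist i l ω]
    rw [hpreT, ← Measure.map_apply hTmeas hS3meas, hmapT, Measure.prod_apply hS3meas]
    calc ∫⁻ xy, ν (Prod.mk xy ⁻¹' S3) ∂(ν.prod ν)
        ≤ ∫⁻ xy, (Sij (c i) (c j)).indicator
            (fun _ => ENNReal.ofReal (4*δ*M)) xy ∂(ν.prod ν) := by
          refine lintegral_mono fun xy => ?_
          by_cases h1 : xy ∈ Sij (c i) (c j)
          · rw [Set.indicator_of_mem h1]
            have hsub : Prod.mk xy ⁻¹' S3 ⊆
                {z : ℝ | distToInt ((c i + xy.1 - c l) - z) ≤ δ} := by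
              intro z hz
              simp only [hS3, Set.mem_preimage, Set.mem_setOf_eq] at hz
              have := hz.2
              rw [show (c i + xy.1) - (c l + z) = (c i + xy.1 - c l) - z by ring] at this
              exact this
            exact le_trans (measure_mono hsub) (JitterAux.kernel_bound M hM δ hδ _)
          · rw [Set.indicator_of_notMem h1]
            have hempty : Prod.mk xy ⁻¹' S3 = ∅ := by
              ext z
              simp only [hS3, Set.mem_preimage, Set.mem_setOf_eq, Set.mem_empty_iff_false,
                iff_false, not_and]
              intro hcond
              exact absurd hcond h1
            rw [hempty, measure_empty]
      _ = ENNReal.ofReal (4*δ*M) * (ν.prod ν) (Sij (c i) (c j)) := by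
          rw [lintegral_indicator (hSijmeas _ _), setLIntegral_const]
      _ ≤ ENNReal.ofReal (4*δ*M) * ENNReal.ofReal (4*δ*M) := by
          gcongr
          exact JitterAux.pair_bound M hM δ hδ _ _
  have hPdisj : ∀ i j k' l, i ≠ j → k' ≠ l → i ≠ k' → i ≠ l → j ≠ k' → j ≠ l →
      P (E i j ∩ E k' l) = P (E i j) * P (E k' l) := by
    intro i j k' l hij hkl hik hil hjk hjl
    have h := hZindep.indepFun_prodMk_prodMk hZmeas i j k' l hik hil hjk hjl
    rw [hEpre i j, hEpre k' l]
    exact h.measure_inter_preimage_eq_mul _ _ (hSijmeas _ _) (hSijmeas _ _)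
  -- the sum decomposition
  set Pairs : Finset (ℕ × ℕ) :=
    (Finset.Icc 1 N ×ˢ Finset.Icc 1 N).filter (fun p => p.1 ≠ p.2) with hPairs
  have hPmem : ∀ p ∈ Pairs, p.1 ≠ p.2 := fun p hp => (Finset.mem_filter.mp hp).2
  have hPmem' : ∀ p ∈ Pairs, p.1 ∈ Finset.Icc 1 N ∧ p.2 ∈ Finset.Icc 1 N := fun p hp =>
    Finset.mem_product.mp (Finset.mem_filter.mp hp).1
  have hcardIcc : (Finset.Icc 1 N).card = N := by rw [Nat.card_Icc]; omega
  have hcardPairs : Pairs.card ≤ N^2 := by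
    refine le_trans (Finset.card_filter_le _ _) ?_
    rw [Finset.card_product, hcardIcc, sq]
  set f : ℕ × ℕ → Ω → ℝ := fun p => (E p.1 p.2).indicator (fun _ => (1:ℝ)) with hf
  set S : Ω → ℝ := fun ω => ∑ p ∈ Pairs, f p ω with hS
  have hRid : (fun ω => Rpair (fun n => X n ω) s N) = fun ω => (N:ℝ)⁻¹ * S ω := by
    funext ω
    rw [Rpair, div_eq_inv_mul]
    congr 1
    rw [pairCount_eq, ← hδdef]
    push_cast
    rw [hS]
    refine Finset.sum_congr rfl fun p hp => ?_
    have hfi : f p ω = if ω ∈ E p.1 p.2 then (1:ℝ) else 0 := by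
      rw [hf]; exact Set.indicator_apply _ _ _
    rw [hfi]
    by_cases h2 : distToInt (X p.1 ω - X p.2 ω) ≤ δ
    · rw [if_pos h2, if_pos (show ω ∈ E p.1 p.2 from h2)]
    · rw [if_neg h2, if_neg (show ω ∉ E p.1 p.2 from h2)]
  have hintf : ∀ p, Integrable (f p) P := fun p =>
    (integrable_const (1:ℝ)).indicator (hEmeas _ _)
  have hmul : ∀ p q, (fun ω => f p ω * f q ω)
      = (E p.1 p.2 ∩ E q.1 q.2).indicator (fun _ => (1:ℝ)) := by
    intro p q
    funext ω
    rw [hf]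
    simp only []
    rw [← Set.inter_indicator_mul]
    norm_num
  have hint : ∀ p q, Integrable (fun ω => f p ω * f q ω) P := by
    intro p q
    rw [hmul p q]
    exact (integrable_const (1:ℝ)).indicator ((hEmeas _ _).inter (hEmeas _ _))
  set a : ℕ × ℕ → ℝ := fun p => (P (E p.1 p.2)).toReal with ha
  set b : ℕ × ℕ → ℕ × ℕ → ℝ := fun p q => (P (E p.1 p.2 ∩ E q.1 q.2)).toReal with hb
  have hEf : ∀ p, ∫ ω, f p ω ∂P = a p := by
    intro p
    rw [hf, ha]
    simp only []
    rw [integral_indicator_const (1:ℝ) (hEmeas _ _), smul_eq_mul, mul_one, measureReal_def]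
  have hEff : ∀ p q, ∫ ω, f p ω * f q ω ∂P = b p q := by
    intro p q
    rw [hmul p q, hb]
    simp only []
    rw [integral_indicator_const (1:ℝ) ((hEmeas _ _).inter (hEmeas _ _)), smul_eq_mul, mul_one, measureReal_def]
  have hSmem : MemLp S 2 P := by
    rw [hS]
    exact memLp_finset_sum Pairs (fun p _ =>
      memLp_indicator_const 2 (hEmeas p.1 p.2) 1 (Or.inr (measure_ne_top P _)))
  have hvarS : variance S P = ∑ p ∈ Pairs, ∑ q ∈ Pairs, (b p q - a p * a q) := by
    rw [variance_eq_sub hSmem]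
    have hS2 : ∫ ω, (S ^ 2) ω ∂P = ∑ p ∈ Pairs, ∑ q ∈ Pairs, b p q := by
      rw [show (S ^ 2) = fun ω => ∑ p ∈ Pairs, ∑ q ∈ Pairs, f p ω * f q ω by
        funext ω
        rw [Pi.pow_apply, hS, sq, Finset.sum_mul_sum]]
      rw [integral_finset_sum Pairs (fun p _ => integrable_finset_sum Pairs
        (fun q _ => hint p q))]
      refine Finset.sum_congr rfl fun p _ => ?_
      rw [integral_finset_sum Pairs (fun q _ => hint p q)]
      exact Finset.sum_congr rfl fun q _ => hEff p q
    have hS1 : ∫ ω, S ω ∂P = ∑ p ∈ Pairs, a p := by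
      calc ∫ ω, S ω ∂P = ∫ ω, ∑ p ∈ Pairs, f p ω ∂P := rfl
        _ = ∑ p ∈ Pairs, ∫ ω, f p ω ∂P := integral_finset_sum _ (fun p _ => hintf p)
        _ = ∑ p ∈ Pairs, a p := Finset.sum_congr rfl fun p _ => hEf p
    rw [hS2, hS1, sq, Finset.sum_mul_sum, ← Finset.sum_sub_distrib]
    exact Finset.sum_congr rfl fun p _ => (Finset.sum_sub_distrib _ _).symm
  have haM : (0:ℝ) ≤ 4*δ*M := by positivity
  have ha_le : ∀ p ∈ Pairs, a p ≤ 4*δ*M := fun p hp =>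
    ENNReal.toReal_le_of_le_ofReal haM (hPE p.1 p.2 (hPmem p hp))
  have ha_nonneg : ∀ p, 0 ≤ a p := fun p => ENNReal.toReal_nonneg
  have hb_le_a : ∀ p q, b p q ≤ a p := fun p q =>
    ENNReal.toReal_mono (measure_ne_top P _) (measure_mono Set.inter_subset_left)
  have hterm : ∀ p ∈ Pairs, ∀ q ∈ Pairs,
      b p q - a p * a q ≤ (if q = p ∨ q = (p.2, p.1) then 4*δ*M else 0)
        + (if p.1 = q.1 ∨ p.1 = q.2 ∨ p.2 = q.1 ∨ p.2 = q.2 then 16*δ^2*M^2 else 0) := by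
    intro p hp q hq
    have hp12 : p.1 ≠ p.2 := hPmem p hp
    have hq12 : q.1 ≠ q.2 := hPmem q hq
    by_cases hshare : p.1 = q.1 ∨ p.1 = q.2 ∨ p.2 = q.1 ∨ p.2 = q.2
    · rw [if_pos hshare]
      by_cases hpq : q = p ∨ q = (p.2, p.1)
      · rw [if_pos hpq]
        have h1 : b p q ≤ a p := hb_le_a p q
        have h2 : (0:ℝ) ≤ 16*δ^2*M^2 := by positivity
        have h3 : (0:ℝ) ≤ a p * a q := mul_nonneg (ha_nonneg p) (ha_nonneg q)
        have h4 := ha_le p hp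
        linarith
      · rw [if_neg hpq, zero_add]
        push_neg at hpq
        have hkey : P (E p.1 p.2 ∩ E q.1 q.2)
            ≤ ENNReal.ofReal (4*δ*M) * ENNReal.ofReal (4*δ*M) := by
          rcases hshare with h | h | h | h
          · have hne : p.2 ≠ q.2 := fun hc => hpq.1 (Prod.ext h.symm hc.symm)
            rw [show E q.1 q.2 = E p.1 q.2 by rw [← h]]
            exact hPtriple p.1 p.2 q.2 hp12 (h ▸ hq12) hne
          · have hne : p.2 ≠ q.1 := fun hc => hpq.2 (Prod.ext hc.symm h.symm)
            rw [hEsymm q.1 q.2, show E q.2 q.1 = E p.1 q.1 by rw [← h]]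
            exact hPtriple p.1 p.2 q.1 hp12 (fun hc => hq12 ((h.symm.trans hc).symm)) hne
          · have hne : p.1 ≠ q.2 := fun hc => hpq.2 (Prod.ext h.symm hc.symm)
            rw [hEsymm p.1 p.2, show E q.1 q.2 = E p.2 q.2 by rw [← h]]
            exact hPtriple p.2 p.1 q.2 hp12.symm (h ▸ hq12) hne
          · have hne : p.1 ≠ q.1 := fun hc => hpq.1 (Prod.ext hc.symm h.symm)
            rw [hEsymm p.1 p.2, hEsymm q.1 q.2, show E q.2 q.1 = E p.2 q.1 by rw [← h]]
            exact hPtriple p.2 p.1 q.1 hp12.symm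
              (fun hc => hq12 ((h.symm.trans hc).symm)) hne
        have hbb : b p q ≤ 16*δ^2*M^2 := by
          refine ENNReal.toReal_le_of_le_ofReal (by positivity) ?_
          refine le_trans hkey ?_
          rw [← ENNReal.ofReal_mul haM]
          exact ENNReal.ofReal_le_ofReal (le_of_eq (by ring))
        have h3 : (0:ℝ) ≤ a p * a q := mul_nonneg (ha_nonneg p) (ha_nonneg q)
        linarith
    · push_neg at hshare
      have hpq : ¬(q = p ∨ q = (p.2, p.1)) := by
        rintro (hc | hc)
        · exact hshare.1 (by rw [hc])
        · exact hshare.2.2.1 (by rw [hc])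
      rw [if_neg hpq, if_neg (by push_neg; exact hshare)]
      have heq : b p q = a p * a q := by
        rw [hb, ha]
        simp only []
        rw [hPdisj p.1 p.2 q.1 q.2 hp12 hq12 hshare.1 hshare.2.1 hshare.2.2.1 hshare.2.2.2,
          ENNReal.toReal_mul]
      rw [heq]
      simp
  -- sum the bounds
  have hsum1 : ∀ p ∈ Pairs,
      ∑ q ∈ Pairs, (if q = p ∨ q = (p.2, p.1) then 4*δ*M else 0) ≤ 2*(4*δ*M) := by
    intro p hp
    rw [← Finset.sum_filter, Finset.sum_const]
    have hcard : (Pairs.filter (fun q => q = p ∨ q = (p.2, p.1))).card ≤ 2 := by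
      refine le_trans (Finset.card_le_card (fun q hq => ?_))
        (le_trans (Finset.card_insert_le p {(p.2, p.1)}) (by simp))
      have := (Finset.mem_filter.mp hq).2
      simp only [Finset.mem_insert, Finset.mem_singleton]
      exact this
    rw [nsmul_eq_mul]
    exact mul_le_mul_of_nonneg_right (by exact_mod_cast hcard) haM
  have hsum2 : ∀ p ∈ Pairs,
      ∑ q ∈ Pairs, (if p.1 = q.1 ∨ p.1 = q.2 ∨ p.2 = q.1 ∨ p.2 = q.2
        then 16*δ^2*M^2 else 0) ≤ (4*N) * (16*δ^2*M^2) := by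
    intro p hp
    rw [← Finset.sum_filter, Finset.sum_const]
    have hcard : (Pairs.filter (fun q =>
        p.1 = q.1 ∨ p.1 = q.2 ∨ p.2 = q.1 ∨ p.2 = q.2)).card ≤ 4*N := by
      have hsub : Pairs.filter (fun q => p.1 = q.1 ∨ p.1 = q.2 ∨ p.2 = q.1 ∨ p.2 = q.2)
          ⊆ ({p.1, p.2} ×ˢ Finset.Icc 1 N) ∪ (Finset.Icc 1 N ×ˢ {p.1, p.2}) := by
        intro q hq
        have hmem := hPmem' q (Finset.mem_filter.mp hq).1
        have hcond := (Finset.mem_filter.mp hq).2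
        rw [Finset.mem_union, Finset.mem_product, Finset.mem_product]
        rcases hcond with h | h | h | h
        · exact Or.inl ⟨by simp [← h], hmem.2⟩
        · exact Or.inr ⟨hmem.1, by simp [← h]⟩
        · exact Or.inl ⟨by simp [← h], hmem.2⟩
        · exact Or.inr ⟨hmem.1, by simp [← h]⟩
      refine le_trans (Finset.card_le_card hsub) (le_trans (Finset.card_union_le _ _) ?_)
      have h2 : ({p.1, p.2} : Finset ℕ).card ≤ 2 :=
        le_trans (Finset.card_insert_le _ _) (by simp)
      rw [Finset.card_product, Finset.card_product, hcardIcc]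
      calc ({p.1, p.2} : Finset ℕ).card * N + N * ({p.1, p.2} : Finset ℕ).card
          ≤ 2 * N + N * 2 := by
            exact Nat.add_le_add (Nat.mul_le_mul_right N h2) (Nat.mul_le_mul_left N h2)
        _ = 4 * N := by ring
    rw [nsmul_eq_mul]
    refine mul_le_mul_of_nonneg_right ?_ (by positivity)
    calc ((Pairs.filter _).card : ℝ) ≤ ((4*N : ℕ) : ℝ) := by exact_mod_cast hcard
      _ = 4*N := by push_cast; ring
  have hvarS_le : variance S P ≤ (N:ℝ)^2 * (2*(4*δ*M) + (4*N) * (16*δ^2*M^2)) := by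
    rw [hvarS]
    calc ∑ p ∈ Pairs, ∑ q ∈ Pairs, (b p q - a p * a q)
        ≤ ∑ p ∈ Pairs, (2*(4*δ*M) + (4*N) * (16*δ^2*M^2)) := by
          refine Finset.sum_le_sum fun p hp => ?_
          calc ∑ q ∈ Pairs, (b p q - a p * a q)
              ≤ ∑ q ∈ Pairs, ((if q = p ∨ q = (p.2, p.1) then 4*δ*M else 0)
                + (if p.1 = q.1 ∨ p.1 = q.2 ∨ p.2 = q.1 ∨ p.2 = q.2
                    then 16*δ^2*M^2 else 0)) :=
                Finset.sum_le_sum fun q hq => hterm p hp q hq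
            _ = (∑ q ∈ Pairs, (if q = p ∨ q = (p.2, p.1) then 4*δ*M else 0))
                + ∑ q ∈ Pairs, (if p.1 = q.1 ∨ p.1 = q.2 ∨ p.2 = q.1 ∨ p.2 = q.2
                    then 16*δ^2*M^2 else 0) := Finset.sum_add_distrib
            _ ≤ 2*(4*δ*M) + (4*N) * (16*δ^2*M^2) := add_le_add (hsum1 p hp) (hsum2 p hp)
      _ ≤ (N:ℝ)^2 * (2*(4*δ*M) + (4*N) * (16*δ^2*M^2)) := by
          rw [Finset.sum_const, nsmul_eq_mul]
          refine mul_le_mul_of_nonneg_right ?_ (by positivity)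
          calc (Pairs.card : ℝ) ≤ ((N^2 : ℕ) : ℝ) := by exact_mod_cast hcardPairs
            _ = (N:ℝ)^2 := by push_cast; ring
  rw [hNdef] at hRid ⊢
  rw [show (fun ω => Rpair (fun n => X n ω) s (k*M)) = fun ω => ((k*M : ℕ):ℝ)⁻¹ * S ω by
    exact_mod_cast hRid]
  rw [variance_const_mul]
  rw [← hNdef]
  calc ((N:ℝ)⁻¹)^2 * variance S P
      ≤ ((N:ℝ)⁻¹)^2 * ((N:ℝ)^2 * (2*(4*δ*M) + (4*N) * (16*δ^2*M^2))) := by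
        refine mul_le_mul_of_nonneg_left hvarS_le (by positivity)
    _ = 8*δ*M + 64*(N:ℝ)*δ^2*M^2 := by
        field_simp
        ring
    _ = (8*s*M + 64*s^2*M^2) / (N:ℝ) := by
        rw [hδdef]
        field_simp
end

section
/- Let (X_n)_{n∈ℕ} be a sequential jittered sampling sequence, α ∈ (0,1) and s > 0. Then E[ Σ_{1≤i,j,k≤N distinct} 1{‖X_i − X_j‖ ≤ s/N^α} · 1{‖X_i − X_k‖ ≤ s/N^α} ] = O(N^{3−α}), with implied constant depending only on s and α. -/
open MeasureTheory ProbabilityTheory Filter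
open scoped ENNReal

open Classical in
/-- Indices `j < 2^(n+1)` such that the dyadic cell `[j/2^(n+1), (j+1)/2^(n+1))`
contains none of the points `x 1, …, x (2^n)`. -/
noncomputable def emptyCells (x : ℕ → ℝ) (n : ℕ) : Finset ℕ :=
  (Finset.range (2 ^ (n + 1))).filter fun j =>
    ∀ i ∈ Finset.Icc 1 (2 ^ n),
      x i ∉ Set.Ico ((j : ℝ) / 2 ^ (n + 1)) (((j : ℝ) + 1) / 2 ^ (n + 1))

/-- The `k`-th (0-based, in increasing order) empty dyadic cell index. -/
noncomputable def cellOf (x : ℕ → ℝ) (n k : ℕ) : ℕ :=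
  ((emptyCells x n).sort (· ≤ ·)).getD k 0

/-- Codomains of the randomness used by sequential jittered sampling. -/
def jitterType : (Unit ⊕ ℕ ⊕ ℕ × ℕ) → Type
  | Sum.inl _ => Bool
  | Sum.inr (Sum.inl m) => Equiv.Perm (Fin (2 ^ m))
  | Sum.inr (Sum.inr _) => ℝ

noncomputable def jitterMeas : ∀ i, MeasurableSpace (jitterType i)
  | Sum.inl _ => inferInstanceAs (MeasurableSpace Bool)
  | Sum.inr (Sum.inl _) => ⊤
  | Sum.inr (Sum.inr _) => inferInstanceAs (MeasurableSpace ℝ)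

def jitterFam {Ω : Type*} (B : Ω → Bool) (π : (m : ℕ) → Ω → Equiv.Perm (Fin (2 ^ m)))
    (Z : ℕ → ℕ → Ω → ℝ) : ∀ i, Ω → jitterType i
  | Sum.inl _ => B
  | Sum.inr (Sum.inl m) => π m
  | Sum.inr (Sum.inr p) => Z p.1 p.2

/-- `X` is a sequential jittered sampling sequence (indices starting at 1) on `(Ω, P)`. -/
def IsSeqJitter {Ω : Type*} [MeasurableSpace Ω] (P : Measure Ω) (X : ℕ → Ω → ℝ) : Prop :=
  IsProbabilityMeasure P ∧
  ∃ (B : Ω → Bool) (π : (m : ℕ) → Ω → Equiv.Perm (Fin (2 ^ m))) (Z : ℕ → ℕ → Ω → ℝ),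
    Measurable B ∧ (∀ m, @Measurable _ _ _ ⊤ (π m)) ∧ (∀ m k, Measurable (Z m k)) ∧
    iIndepFun (m := jitterMeas) (jitterFam B π Z) P ∧
    P {ω | B ω = true} = 1 / 2 ∧
    (∀ (m : ℕ) (e : Equiv.Perm (Fin (2 ^ m))),
      P {ω | π m ω = e} = ((Nat.factorial (2 ^ m) : ℝ≥0∞))⁻¹) ∧
    (∀ m k, Measure.map (Z m k) P = volume.restrict (Set.Ico (0 : ℝ) 1)) ∧
    (∀ ω, X 1 ω = (if B ω then 0 else 1 / 2) + Z 0 0 ω / 2) ∧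
    (∀ ω, X 2 ω = (if B ω then 1 / 2 else 0) + Z 0 1 ω / 2) ∧
    (∀ n : ℕ, 1 ≤ n → ∀ k : Fin (2 ^ n), ∀ ω : Ω,
      X (2 ^ n + (k : ℕ) + 1) ω =
        (cellOf (fun i => X i ω) n ((π n ω k : Fin (2 ^ n)) : ℕ) : ℝ) / 2 ^ (n + 1)
          + Z n (k : ℕ) ω / 2 ^ (n + 1))

open Classical in
/-- Number of triples `(i, j, k)` of distinct indices in `{1, …, N}` with
`‖x i - x j‖ ≤ δ` and `‖x i - x k‖ ≤ δ`. -/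
noncomputable def tripleCount (x : ℕ → ℝ) (δ : ℝ) (N : ℕ) : ℕ :=
  ((Finset.Icc 1 N ×ˢ Finset.Icc 1 N ×ˢ Finset.Icc 1 N).filter fun t =>
    t.1 ≠ t.2.1 ∧ t.1 ≠ t.2.2 ∧ t.2.1 ≠ t.2.2 ∧
      distToInt (x t.1 - x t.2.1) ≤ δ ∧ distToInt (x t.1 - x t.2.2) ≤ δ).card

/-- Stratification property at depth `n`. -/
def strat (x : ℕ → ℝ) (n : ℕ) : Prop :=
  (∀ i ∈ Finset.Icc 1 (2^n), x i ∈ Set.Ico (0:ℝ) 1) ∧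
  Set.InjOn (fun i => ⌊x i * 2^n⌋₊) (Finset.Icc 1 (2^n))

lemma cell_mem_iff {y : ℝ} (hy : 0 ≤ y) (m j : ℕ) :
    y ∈ Set.Ico ((j : ℝ) / 2 ^ m) (((j : ℝ) + 1) / 2 ^ m) ↔ ⌊y * 2^m⌋₊ = j := by
  have h2 : (0:ℝ) < 2^m := by positivity
  rw [Set.mem_Ico, Nat.floor_eq_iff (by positivity), div_le_iff₀ h2, lt_div_iff₀ h2]

lemma floor_halve (y : ℝ) (m : ℕ) : ⌊y * 2^m⌋₊ = ⌊y * 2^(m+1)⌋₊ / 2 := by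
  have : y * 2^m = (y * 2^(m+1)) / (2:ℕ) := by push_cast; ring
  rw [this, Nat.floor_div_natCast]

lemma strat_injOn_succ {x : ℕ → ℝ} {n : ℕ} (h : strat x n) :
    Set.InjOn (fun i => ⌊x i * 2^(n+1)⌋₊) (Finset.Icc 1 (2^n)) := by
  intro i hi j hj hij
  have hij' : ⌊x i * 2^(n+1)⌋₊ = ⌊x j * 2^(n+1)⌋₊ := hij
  have : ⌊x i * 2^n⌋₊ = ⌊x j * 2^n⌋₊ := by
    rw [floor_halve (x i) n, floor_halve (x j) n, hij']
  exact h.2 hi hj this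

open Classical in
lemma emptyCells_eq {x : ℕ → ℝ} {n : ℕ} (h : strat x n) :
    emptyCells x n = Finset.range (2^(n+1)) \
      ((Finset.Icc 1 (2^n)).image fun i => ⌊x i * 2^(n+1)⌋₊) := by
  ext j
  simp only [emptyCells, Finset.mem_filter, Finset.mem_sdiff, Finset.mem_range,
    Finset.mem_image]
  constructor
  · rintro ⟨hj, hempty⟩
    refine ⟨hj, ?_⟩
    rintro ⟨i, hi, hfi⟩
    exact hempty i hi ((cell_mem_iff (h.1 i hi).1 (n+1) j).mpr hfi)
  · rintro ⟨hj, hocc⟩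
    refine ⟨hj, fun i hi hmem => hocc ⟨i, hi, (cell_mem_iff (h.1 i hi).1 (n+1) j).mp hmem⟩⟩

lemma emptyCells_card {x : ℕ → ℝ} {n : ℕ} (h : strat x n) :
    (emptyCells x n).card = 2^n := by
  rw [emptyCells_eq h]
  have hsub : ((Finset.Icc 1 (2^n)).image fun i => ⌊x i * 2^(n+1)⌋₊) ⊆
      Finset.range (2^(n+1)) := by
    intro c hc
    simp only [Finset.mem_image] at hc
    obtain ⟨i, hi, rfl⟩ := hc
    have hx := h.1 i hi
    rw [Finset.mem_range]
    have : x i * 2^(n+1) < 2^(n+1) := by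
      have h2 : (0:ℝ) < 2^(n+1) := by positivity
      nlinarith [hx.2]
    rw [Nat.floor_lt (mul_nonneg hx.1 (by positivity))]
    push_cast
    exact this
  rw [Finset.card_sdiff_of_subset hsub, Finset.card_image_of_injOn (strat_injOn_succ h),
    Finset.card_range, Nat.card_Icc]
  have h2 : (2:ℕ)^(n+1) = 2^n + 2^n := by rw [pow_succ]; ring
  rw [h2]
  simp

lemma cellOf_mem {x : ℕ → ℝ} {n : ℕ} (h : strat x n) {k : ℕ} (hk : k < 2^n) :
    cellOf x n k ∈ emptyCells x n := by
  have hlen : ((emptyCells x n).sort (· ≤ ·)).length = 2^n := by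
    rw [Finset.length_sort, emptyCells_card h]
  have hk' : k < ((emptyCells x n).sort (· ≤ ·)).length := by omega
  rw [cellOf, List.getD_eq_getElem _ _ hk']
  rw [← Finset.mem_sort (α := ℕ) (· ≤ ·)]
  exact List.getElem_mem _

lemma cellOf_inj {x : ℕ → ℝ} {n : ℕ} (h : strat x n) {k k' : ℕ}
    (hk : k < 2^n) (hk' : k' < 2^n) (heq : cellOf x n k = cellOf x n k') : k = k' := by
  have hlen : ((emptyCells x n).sort (· ≤ ·)).length = 2^n := by
    rw [Finset.length_sort, emptyCells_card h]
  have h1 : k < ((emptyCells x n).sort (· ≤ ·)).length := by omega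
  have h2 : k' < ((emptyCells x n).sort (· ≤ ·)).length := by omega
  rw [cellOf, cellOf, List.getD_eq_getElem _ _ h1, List.getD_eq_getElem _ _ h2] at heq
  have hnd : ((emptyCells x n).sort (· ≤ ·)).Nodup := Finset.sort_nodup _ _
  exact hnd.getElem_inj_iff.mp heq

lemma new_point_props {x : ℕ → ℝ} {n : ℕ} (h : strat x n) {c : ℕ} (hc : c ∈ emptyCells x n)
    {z : ℝ} (hz : z ∈ Set.Ico (0:ℝ) 1) {y : ℝ}
    (hy : y = (c:ℝ) / 2^(n+1) + z / 2^(n+1)) :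
    y ∈ Set.Ico (0:ℝ) 1 ∧ ⌊y * 2^(n+1)⌋₊ = c := by
  have hz0 := hz.1
  have hz1 := hz.2
  have hcP : c < 2^(n+1) := by
    have hc' := hc
    simp only [emptyCells, Finset.mem_filter, Finset.mem_range] at hc'
    exact hc'.1
  have h2 : (0:ℝ) < 2^(n+1) := by positivity
  have hyP : y * 2^(n+1) = c + z := by rw [hy]; field_simp
  have hfloor : ⌊y * 2^(n+1)⌋₊ = c := by
    rw [hyP, Nat.floor_eq_iff (by positivity)]
    constructor
    · linarith
    · push_cast; linarith
  refine ⟨Set.mem_Ico.mpr ⟨?_, ?_⟩, hfloor⟩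
  · rw [hy]; positivity
  · have hcP' : (c:ℝ) + 1 ≤ 2^(n+1) := by exact_mod_cast Nat.succ_le_of_lt hcP
    have hlt : y * 2^(n+1) < 2^(n+1) := by rw [hyP]; push_cast at hcP' ⊢; linarith
    nlinarith

lemma old_cell_not_empty {x : ℕ → ℝ} {n : ℕ} (h : strat x n) {i : ℕ}
    (hi : i ∈ Finset.Icc 1 (2^n)) : ⌊x i * 2^(n+1)⌋₊ ∉ emptyCells x n := by
  intro hmem
  simp only [emptyCells, Finset.mem_filter] at hmem
  exact hmem.2 i hi ((cell_mem_iff (h.1 i hi).1 (n+1) _).mpr rfl)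

lemma strat_step {x : ℕ → ℝ} {n : ℕ} (h : strat x n)
    (e : Equiv.Perm (Fin (2^n))) (z : ℕ → ℝ) (hz : ∀ k, z k ∈ Set.Ico (0:ℝ) 1)
    (hxnew : ∀ k : Fin (2^n), x (2^n + (k:ℕ) + 1) =
      (cellOf x n ((e k : Fin (2^n)) : ℕ) : ℝ) / 2^(n+1) + z (k:ℕ) / 2^(n+1)) :
    strat x (n+1) := by
  have hsplit : ∀ i ∈ Finset.Icc 1 (2^(n+1)), i ∈ Finset.Icc 1 (2^n) ∨
      ∃ k : Fin (2^n), i = 2^n + (k:ℕ) + 1 := by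
    intro i hi
    simp only [Finset.mem_Icc] at hi ⊢
    rcases le_or_gt i (2^n) with hle | hgt
    · exact Or.inl ⟨hi.1, hle⟩
    · right
      have hk : i - 2^n - 1 < 2^n := by
        have : (2:ℕ)^(n+1) = 2^n + 2^n := by rw [pow_succ]; ring
        omega
      exact ⟨⟨i - 2^n - 1, hk⟩, by simp; omega⟩
  -- properties of new points
  have hnew : ∀ k : Fin (2^n), x (2^n + (k:ℕ) + 1) ∈ Set.Ico (0:ℝ) 1 ∧
      ⌊x (2^n + (k:ℕ) + 1) * 2^(n+1)⌋₊ = cellOf x n ((e k : Fin (2^n)) : ℕ) := by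
    intro k
    exact new_point_props h (cellOf_mem h (e k).isLt) (hz k) (hxnew k)
  constructor
  · intro i hi
    rcases hsplit i hi with hold | ⟨k, rfl⟩
    · exact h.1 i hold
    · exact (hnew k).1
  · intro i hi j hj hij
    simp only [Finset.mem_coe] at hi hj
    have hij' : ⌊x i * 2^(n+1)⌋₊ = ⌊x j * 2^(n+1)⌋₊ := hij
    rcases hsplit i hi with holdi | ⟨k, rfl⟩ <;> rcases hsplit j hj with holdj | ⟨k', rfl⟩
    · exact strat_injOn_succ h holdi holdj hij'
    · exfalso
      apply old_cell_not_empty h holdi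
      rw [hij', (hnew k').2]
      exact cellOf_mem h (e k').isLt
    · exfalso
      apply old_cell_not_empty h holdj
      rw [← hij', (hnew k).2]
      exact cellOf_mem h (e k).isLt
    · have : cellOf x n ((e k : Fin (2^n)) : ℕ) = cellOf x n ((e k' : Fin (2^n)) : ℕ) := by
        rw [← (hnew k).2, ← (hnew k').2, hij']
      have hkk : (e k : Fin (2^n)) = (e k' : Fin (2^n)) :=
        Fin.ext (cellOf_inj h (e k).isLt (e k').isLt this)
      have : k = k' := e.injective hkk
      rw [this]

lemma strat_base (x : ℕ → ℝ) (b : Bool) (z0 z1 : ℝ)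
    (hz0 : z0 ∈ Set.Ico (0:ℝ) 1) (hz1 : z1 ∈ Set.Ico (0:ℝ) 1)
    (h1 : x 1 = (if b then 0 else 1/2) + z0/2)
    (h2 : x 2 = (if b then 1/2 else 0) + z1/2) :
    strat x 0 ∧ strat x 1 := by
  obtain ⟨hz00, hz01⟩ := hz0
  obtain ⟨hz10, hz11⟩ := hz1
  have hx1 : x 1 ∈ Set.Ico (0:ℝ) 1 := by
    rw [h1]; cases b <;> simp <;> constructor <;> linarith
  have hx2 : x 2 ∈ Set.Ico (0:ℝ) 1 := by
    rw [h2]; cases b <;> simp <;> constructor <;> linarith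
  have key : ∀ z : ℝ, 0 ≤ z → z < 1 →
      (⌊((0:ℝ) + z/2)*2^1⌋₊ = 0 ∧ ⌊((1/2:ℝ) + z/2)*2^1⌋₊ = 1) := by
    intro z h0 h1
    constructor
    · rw [Nat.floor_eq_zero]; nlinarith
    · rw [Nat.floor_eq_iff (by nlinarith)]
      push_cast
      constructor <;> nlinarith
  have hf1 : ⌊x 1 * 2^1⌋₊ = if b then 0 else 1 := by
    rw [h1]; cases b
    · simpa using (key z0 hz00 hz01).2
    · simpa using (key z0 hz00 hz01).1
  have hf2 : ⌊x 2 * 2^1⌋₊ = if b then 1 else 0 := by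
    rw [h2]; cases b
    · simpa using (key z1 hz10 hz11).1
    · simpa using (key z1 hz10 hz11).2
  constructor
  · refine ⟨?_, ?_⟩
    · intro i hi
      simp only [pow_zero, Finset.mem_Icc] at hi
      have : i = 1 := by omega
      rw [this]; exact hx1
    · intro i hi j hj _
      simp only [Finset.coe_Icc, Set.mem_Icc, pow_zero] at hi hj
      omega
  · refine ⟨?_, ?_⟩
    · intro i hi
      simp only [Finset.mem_Icc] at hi
      have h2n : (2:ℕ)^1 = 2 := by norm_num
      rw [h2n] at hi
      obtain ⟨hi1, hi2⟩ := hi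
      interval_cases i
      · exact hx1
      · exact hx2
    · intro i hi j hj hij
      simp only [Finset.coe_Icc, Set.mem_Icc] at hi hj
      have h2n : (2:ℕ)^1 = 2 := by norm_num
      rw [h2n] at hi hj
      simp only at hij
      obtain ⟨hi1, hi2⟩ := hi
      obtain ⟨hj1, hj2⟩ := hj
      interval_cases i <;> interval_cases j <;> first
        | rfl
        | (exfalso; rw [hf1, hf2] at hij; cases b <;> simp at hij)
        | (exfalso; rw [hf2, hf1] at hij; cases b <;> simp at hij)

lemma strat_all (x : ℕ → ℝ) (b : Bool) (z : ℕ → ℕ → ℝ)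
    (e : (m : ℕ) → Equiv.Perm (Fin (2^m)))
    (hz : ∀ m k, z m k ∈ Set.Ico (0:ℝ) 1)
    (h1 : x 1 = (if b then 0 else 1/2) + z 0 0 / 2)
    (h2 : x 2 = (if b then 1/2 else 0) + z 0 1 / 2)
    (hrec : ∀ n : ℕ, 1 ≤ n → ∀ k : Fin (2^n),
      x (2^n + (k:ℕ) + 1) =
        (cellOf x n ((e n k : Fin (2^n)) : ℕ) : ℝ) / 2^(n+1) + z n (k:ℕ) / 2^(n+1)) :
    ∀ n, strat x n := by
  intro n
  induction n with
  | zero => exact (strat_base x b _ _ (hz 0 0) (hz 0 1) h1 h2).1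
  | succ m ih =>
    rcases Nat.eq_zero_or_pos m with rfl | hm
    · exact (strat_base x b _ _ (hz 0 0) (hz 0 1) h1 h2).2
    · exact strat_step ih (e m) (z m) (fun k => hz m k) (hrec m hm)

lemma round_mem {a b : ℝ} (ha : a ∈ Set.Ico (0:ℝ) 1) (hb : b ∈ Set.Ico (0:ℝ) 1) :
    round (a - b) = -1 ∨ round (a - b) = 0 ∨ round (a - b) = 1 := by
  obtain ⟨ha0, ha1⟩ := ha; obtain ⟨hb0, hb1⟩ := hb
  have h1 : |a - b - round (a-b)| ≤ 1/2 := abs_sub_round (a - b)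
  have h2 : |a - b| < 1 := by rw [abs_lt]; constructor <;> linarith
  have h3 : |(round (a-b) : ℝ)| < 3/2 := by
    calc |(round (a-b) : ℝ)| = |(a - b) - ((a-b) - round (a-b))| := by ring_nf
      _ ≤ |a - b| + |(a-b) - round (a-b)| := abs_sub _ _
      _ < 3/2 := by linarith
  have h4 : |round (a-b)| < 2 := by
    have : |(round (a-b) : ℝ)| < 2 := lt_trans h3 (by norm_num)
    rw [← Int.cast_abs] at this; exact_mod_cast this
  rw [abs_lt] at h4; omega

open Classical in
lemma neighbor_card (x : ℕ → ℝ) (δ : ℝ) (hδ : 0 ≤ δ) (N n : ℕ)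
    (hmem : ∀ i ∈ Finset.Icc 1 N, x i ∈ Set.Ico (0:ℝ) 1)
    (hinj : Set.InjOn (fun i => ⌊x i * 2^n⌋₊) (Finset.Icc 1 N))
    (i : ℕ) (hi : x i ∈ Set.Ico (0:ℝ) 1) :
    ((((Finset.Icc 1 N).filter fun j => distToInt (x i - x j) ≤ δ).card : ℝ))
      ≤ 3 * (2 * δ * 2^n + 2) := by
  set F := (Finset.Icc 1 N).filter fun j => distToInt (x i - x j) ≤ δ with hF
  set p : ℤ := 2^n with hp
  set a : ℤ := ⌊(x i - δ) * 2^n - 1⌋ with ha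
  set b : ℤ := ⌊(x i + δ) * 2^n⌋ with hb
  set G : Finset ℤ := Finset.Ioc (a+p) (b+p) ∪ Finset.Ioc a b ∪ Finset.Ioc (a-p) (b-p) with hG
  have himg : F.image (fun j => (⌊x j * 2^n⌋₊ : ℤ)) ⊆ G := by
    intro c hc
    simp only [Finset.mem_image] at hc
    obtain ⟨j, hj, hcj⟩ := hc
    simp only [hF, Finset.mem_filter] at hj
    obtain ⟨hjN, hjd⟩ := hj
    have hxj := hmem j hjN
    have hxj0 : (0:ℝ) ≤ x j := hxj.1
    -- c = ⌊x j * 2^n⌋ as an integer floor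
    have hflo : ((⌊x j * 2^n⌋₊ : ℤ)) = ⌊x j * 2^n⌋ :=
      Int.natCast_floor_eq_floor (by positivity)
    rw [hflo] at hcj
    subst hcj
    set c : ℤ := ⌊x j * 2^n⌋ with hc
    have hc1 : (c:ℝ) ≤ x j * 2^n := Int.floor_le _
    have hc2 : x j * 2^n < c + 1 := Int.lt_floor_add_one _
    set m : ℤ := round (x i - x j) with hm
    have hmd : |x i - x j - m| ≤ δ := le_trans (le_refl _) (by simpa [distToInt] using hjd)
    have hxlo : x i - (m:ℝ) - δ ≤ x j := by
      have := abs_le.mp hmd; linarith [this.2]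
    have hxhi : x j ≤ x i - (m:ℝ) + δ := by
      have := abs_le.mp hmd; linarith [this.1]
    have hpc : ((p:ℤ):ℝ) = (2:ℝ)^n := by push_cast [hp]; ring
    have hlow : a < c + m * p := by
      have h1 : (a:ℝ) ≤ (x i - δ) * 2^n - 1 := Int.floor_le _
      have h2 : ((c + m*p : ℤ):ℝ) > (x i - δ) * 2^n - 1 := by
        push_cast
        have : (x i - (m:ℝ) - δ) * 2^n ≤ x j * 2^n := by
          apply mul_le_mul_of_nonneg_right hxlo (by positivity)
        rw [hpc]
        nlinarith
      exact_mod_cast lt_of_le_of_lt h1 h2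
    have hhigh : c + m * p ≤ b := by
      apply Int.le_floor.mpr
      push_cast
      have : x j * 2^n ≤ (x i - (m:ℝ) + δ) * 2^n := by
        apply mul_le_mul_of_nonneg_right hxhi (by positivity)
      rw [hpc]
      nlinarith
    have hm3 : m = -1 ∨ m = 0 ∨ m = 1 := round_mem hi hxj
    simp only [hG, Finset.mem_union, Finset.mem_Ioc]
    rcases hm3 with h | h | h <;> simp only [h, neg_one_mul, one_mul, zero_mul] at hlow hhigh
    · left; left; constructor <;> omega
    · left; right; constructor <;> omega
    · right; constructor <;> omega
  have hcard1 : F.card = (F.image (fun j => (⌊x j * 2^n⌋₊ : ℤ))).card := by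
    rw [Finset.card_image_of_injOn]
    intro u hu v hv huv
    simp only [hF, Finset.mem_coe, Finset.mem_filter] at hu hv
    have : (⌊x u * 2^n⌋₊ : ℤ) = (⌊x v * 2^n⌋₊ : ℤ) := huv
    exact hinj hu.1 hv.1 (by exact_mod_cast this)
  have hcard2 : (F.image (fun j => (⌊x j * 2^n⌋₊ : ℤ))).card ≤ G.card :=
    Finset.card_le_card himg
  have hGcard : (G.card : ℝ) ≤ 3 * (2 * δ * 2^n + 2) := by
    have e1 : G.card ≤ (Finset.Ioc (a+p) (b+p)).card + (Finset.Ioc a b).card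
        + (Finset.Ioc (a-p) (b-p)).card := by
      calc G.card ≤ (Finset.Ioc (a+p) (b+p) ∪ Finset.Ioc a b).card
            + (Finset.Ioc (a-p) (b-p)).card := Finset.card_union_le _ _
        _ ≤ _ := by gcongr; exact Finset.card_union_le _ _
    have e2 : ∀ t : ℤ, (Finset.Ioc (a+t) (b+t)).card = (b - a).toNat := by
      intro t; rw [Int.card_Ioc]; congr 1; ring
    have e3 : (Finset.Ioc a b).card = (b-a).toNat := Int.card_Ioc a b
    have e4 : (Finset.Ioc (a-p) (b-p)).card = (b-a).toNat := by
      rw [Int.card_Ioc]; congr 1; ring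
    have e5 : G.card ≤ 3 * (b - a).toNat := by
      have := e2 p; omega
    have e6 : (((b-a).toNat : ℤ) : ℝ) ≤ 2 * δ * 2^n + 2 := by
      rcases le_or_gt (b - a) 0 with h | h
      · have : ((b-a).toNat : ℤ) = 0 := by omega
        rw [this]; push_cast; positivity
      · have : ((b-a).toNat : ℤ) = b - a := by omega
        rw [this]
        have h1 : (b:ℝ) ≤ (x i + δ) * 2^n := Int.floor_le _
        have h2 : (x i - δ) * 2^n - 1 - 1 < (a:ℝ) := Int.sub_one_lt_floor _
        push_cast
        nlinarith
    calc (G.card : ℝ) ≤ (3 : ℝ) * ((b-a).toNat : ℤ) := by exact_mod_cast e5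
      _ ≤ 3 * (2 * δ * 2^n + 2) := by
          have := e6; linarith
  calc (F.card : ℝ) = ((F.image (fun j => (⌊x j * 2^n⌋₊ : ℤ))).card : ℝ) := by rw [hcard1]
    _ ≤ (G.card : ℝ) := by exact_mod_cast hcard2
    _ ≤ 3 * (2 * δ * 2^n + 2) := hGcard

open Classical in
lemma tripleCount_le (x : ℕ → ℝ) (δ : ℝ) (hδ : 0 ≤ δ) (N n : ℕ)
    (hmem : ∀ i ∈ Finset.Icc 1 N, x i ∈ Set.Ico (0:ℝ) 1)
    (hinj : Set.InjOn (fun i => ⌊x i * 2^n⌋₊) (Finset.Icc 1 N)) :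
    (tripleCount x δ N : ℝ) ≤ N * (3 * (2 * δ * 2^n + 2))^2 := by
  classical
  set F : ℕ → Finset ℕ := fun i => (Finset.Icc 1 N).filter fun j => distToInt (x i - x j) ≤ δ
    with hFdef
  have hsub : ((Finset.Icc 1 N ×ˢ Finset.Icc 1 N ×ˢ Finset.Icc 1 N).filter fun t =>
      t.1 ≠ t.2.1 ∧ t.1 ≠ t.2.2 ∧ t.2.1 ≠ t.2.2 ∧
        distToInt (x t.1 - x t.2.1) ≤ δ ∧ distToInt (x t.1 - x t.2.2) ≤ δ)
      ⊆ (Finset.Icc 1 N).biUnion fun i => {i} ×ˢ (F i ×ˢ F i) := by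
    intro t ht
    simp only [Finset.mem_filter, Finset.mem_product] at ht
    obtain ⟨⟨h1, h2, h3⟩, _, _, _, hd1, hd2⟩ := ht
    simp only [Finset.mem_biUnion, Finset.mem_product, Finset.mem_singleton, hFdef,
      Finset.mem_filter]
    exact ⟨t.1, h1, rfl, ⟨h2, hd1⟩, ⟨h3, hd2⟩⟩
  have hcard : tripleCount x δ N ≤
      ∑ i ∈ Finset.Icc 1 N, ((F i).card * (F i).card) := by
    calc tripleCount x δ N
        ≤ ((Finset.Icc 1 N).biUnion fun i => {i} ×ˢ (F i ×ˢ F i)).card :=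
          Finset.card_le_card hsub
      _ ≤ ∑ i ∈ Finset.Icc 1 N, ({i} ×ˢ (F i ×ˢ F i)).card := Finset.card_biUnion_le
      _ = ∑ i ∈ Finset.Icc 1 N, ((F i).card * (F i).card) := by
          apply Finset.sum_congr rfl; intro i _
          simp [Finset.card_product]
  have hM : ∀ i ∈ Finset.Icc 1 N, ((F i).card : ℝ) ≤ 3 * (2 * δ * 2^n + 2) := by
    intro i hi
    exact neighbor_card x δ hδ N n hmem hinj i (hmem i hi)
  calc (tripleCount x δ N : ℝ)
      ≤ ∑ i ∈ Finset.Icc 1 N, (((F i).card : ℝ) * ((F i).card : ℝ)) := by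
        exact_mod_cast hcard
    _ ≤ ∑ i ∈ Finset.Icc 1 N, (3 * (2 * δ * 2^n + 2)) * (3 * (2 * δ * 2^n + 2)) := by
        apply Finset.sum_le_sum; intro i hi
        have h1 := hM i hi
        have h0 : (0:ℝ) ≤ ((F i).card : ℝ) := by positivity
        nlinarith
    _ = (Finset.Icc 1 N).card * ((3 * (2 * δ * 2^n + 2)) * (3 * (2 * δ * 2^n + 2))) := by
        rw [Finset.sum_const, nsmul_eq_mul]
    _ ≤ N * (3 * (2 * δ * 2^n + 2))^2 := by
        rw [Nat.card_Icc]; simp; nlinarith [hδ, pow_pos (by norm_num : (0:ℝ) < 2) n]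


lemma pow_clog_le_two_mul {N : ℕ} (hN : 1 ≤ N) : 2 ^ (Nat.clog 2 N) ≤ 2 * N := by
  rcases eq_or_lt_of_le hN with rfl | hN2
  · simp [Nat.clog_one_right]
  · have h1 : 0 < Nat.clog 2 N := Nat.clog_pos (by norm_num) hN2
    have h2 : 2 ^ (Nat.clog 2 N - 1) < N := Nat.pow_pred_clog_lt_self (by norm_num) hN2
    have h3 : 2 ^ (Nat.clog 2 N) = 2 * 2 ^ (Nat.clog 2 N - 1) := by
      rw [← pow_succ']
      congr 1
      omega
    omega

lemma numeric_bound {N : ℕ} (hN : 1 ≤ N) {α s : ℝ} (hα0 : 0 < α) (hα1 : α < 1) (hs : 0 < s)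
    {n : ℕ} (h2n : ((2:ℝ))^n ≤ 2*N) :
    (N:ℝ) * (3*(2*(s/(N:ℝ)^α)*2^n+2))^2 ≤ (12*s+6)^2 * (N:ℝ)^((3:ℝ)-α) := by
  have hNR : (1:ℝ) ≤ N := by exact_mod_cast hN
  have hNpos : (0:ℝ) < N := by linarith
  have hpα : (0:ℝ) < (N:ℝ)^α := Real.rpow_pos_of_pos hNpos α
  have hT1 : (1:ℝ) ≤ (N:ℝ)^((1:ℝ)-α) := by
    have := Real.rpow_le_rpow_of_exponent_le hNR (by linarith : (0:ℝ) ≤ 1-α)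
    rwa [Real.rpow_zero] at this
  have hdiv : (N:ℝ) / (N:ℝ)^α = (N:ℝ)^((1:ℝ)-α) := by
    rw [Real.rpow_sub hNpos, Real.rpow_one]
  have hδpos : 0 < s/(N:ℝ)^α := div_pos hs hpα
  have hA : 3*(2*(s/(N:ℝ)^α)*2^n+2) ≤ (12*s+6) * (N:ℝ)^((1:ℝ)-α) := by
    have h1 : 2*(s/(N:ℝ)^α)*2^n ≤ 4*s*((N:ℝ)^((1:ℝ)-α)) := by
      have h2 : 2*(s/(N:ℝ)^α)*2^n ≤ 2*(s/(N:ℝ)^α)*(2*N) :=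
        mul_le_mul_of_nonneg_left h2n (by positivity)
      rw [show 2*(s/(N:ℝ)^α)*(2*(N:ℝ)) = 4*s*((N:ℝ)/(N:ℝ)^α) by field_simp; ring] at h2
      rwa [hdiv] at h2
    nlinarith [hT1]
  have hLHSpos : (0:ℝ) ≤ 3*(2*(s/(N:ℝ)^α)*2^n+2) := by positivity
  have hsq : (3*(2*(s/(N:ℝ)^α)*2^n+2))^2 ≤ ((12*s+6) * (N:ℝ)^((1:ℝ)-α))^2 :=
    pow_le_pow_left₀ hLHSpos hA 2
  have e1 : ((N:ℝ)^((1:ℝ)-α))^(2:ℕ) = (N:ℝ)^((2:ℝ)-2*α) := by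
    rw [← Real.rpow_natCast ((N:ℝ)^((1:ℝ)-α)) 2, ← Real.rpow_mul hNpos.le]
    congr 1
    push_cast
    ring
  have e2 : (N:ℝ) * (N:ℝ)^((2:ℝ)-2*α) = (N:ℝ)^((3:ℝ)-2*α) := by
    have h := Real.rpow_add hNpos 1 (2-2*α)
    rw [Real.rpow_one] at h
    rw [← h]
    congr 1
    ring
  have e3 : (N:ℝ)^((3:ℝ)-2*α) ≤ (N:ℝ)^((3:ℝ)-α) :=
    Real.rpow_le_rpow_of_exponent_le hNR (by linarith)
  calc (N:ℝ) * (3*(2*(s/(N:ℝ)^α)*2^n+2))^2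
      ≤ (N:ℝ) * ((12*s+6) * (N:ℝ)^((1:ℝ)-α))^2 := by
        apply mul_le_mul_of_nonneg_left hsq hNpos.le
    _ = (12*s+6)^2 * ((N:ℝ) * (N:ℝ)^((2:ℝ)-2*α)) := by
        rw [mul_pow, e1]; ring
    _ = (12*s+6)^2 * (N:ℝ)^((3:ℝ)-2*α) := by rw [e2]
    _ ≤ (12*s+6)^2 * (N:ℝ)^((3:ℝ)-α) := by
        apply mul_le_mul_of_nonneg_left e3 (by positivity)

/-- For sequential jittered sampling, the expected number of distinct triples
`(i, j, k)` with `‖X i - X j‖ ≤ s/N^α` and `‖X i - X k‖ ≤ s/N^α` is `O(N^(3-α))`. -/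
theorem seqJitter_tripleCount_expectation
    {Ω : Type*} [MeasurableSpace Ω] (P : Measure Ω) (X : ℕ → Ω → ℝ)
    (hX : IsSeqJitter P X) (α s : ℝ) (hα : α ∈ Set.Ioo (0 : ℝ) 1) (hs : 0 < s) :
    ∃ C : ℝ, ∀ N : ℕ, 1 ≤ N →
      ∫ ω, (tripleCount (fun j => X j ω) (s / (N : ℝ) ^ α) N : ℝ) ∂P
        ≤ C * (N : ℝ) ^ ((3 : ℝ) - α) := by
  obtain ⟨hP, B, π, Z, hB, hπ, hZmeas, hindep, hBhalf, hπunif, hZdist, hX1, hX2, hrec⟩ := hX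
  haveI := hP
  obtain ⟨hα0, hα1⟩ := hα
  refine ⟨(12*s+6)^2, fun N hN => ?_⟩
  have hNR : (1:ℝ) ≤ (N:ℝ) := by exact_mod_cast hN
  have hNpos : (0:ℝ) < N := by linarith
  have hδ0 : (0:ℝ) ≤ s / (N:ℝ)^α :=
    le_of_lt (div_pos hs (Real.rpow_pos_of_pos hNpos α))
  -- almost surely all jitter variables lie in [0,1)
  have hZae : ∀ᵐ ω ∂P, ∀ m k : ℕ, Z m k ω ∈ Set.Ico (0:ℝ) 1 := by
    rw [ae_all_iff]
    intro m
    rw [ae_all_iff]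
    intro k
    have hmap : P ((Z m k)⁻¹' (Set.Ico 0 1)) = 1 := by
      rw [← Measure.map_apply (hZmeas m k) measurableSet_Ico, hZdist m k]
      simp
    have hcompl : P ((Z m k ⁻¹' Set.Ico 0 1)ᶜ) = 0 :=
      (prob_compl_eq_zero_iff ((hZmeas m k) measurableSet_Ico)).mpr hmap
    exact hcompl
  -- almost sure stratification
  have hstratae : ∀ᵐ ω ∂P, ∀ n, strat (fun i => X i ω) n := by
    filter_upwards [hZae] with ω hω
    exact strat_all (fun i => X i ω) (B ω) (fun m k => Z m k ω) (fun m => π m ω)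
      hω (hX1 ω) (hX2 ω) (fun n hn k => hrec n hn k ω)
  -- pointwise (a.e.) bound
  set n := Nat.clog 2 N with hn
  have hN2n : N ≤ 2^n := Nat.le_pow_clog (by norm_num) N
  have h2nN : ((2:ℝ))^n ≤ 2*(N:ℝ) := by exact_mod_cast pow_clog_le_two_mul hN
  have hbound : ∀ᵐ ω ∂P,
      (tripleCount (fun j => X j ω) (s / (N:ℝ)^α) N : ℝ)
        ≤ (12*s+6)^2 * (N:ℝ)^((3:ℝ)-α) := by
    filter_upwards [hstratae] with ω hω
    have hstrat := hω n
    have hmem : ∀ i ∈ Finset.Icc 1 N, (fun j => X j ω) i ∈ Set.Ico (0:ℝ) 1 := by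
      intro i hi
      apply hstrat.1
      simp only [Finset.mem_Icc] at hi ⊢
      omega
    have hinj : Set.InjOn (fun i => ⌊(fun j => X j ω) i * 2^n⌋₊) (Finset.Icc 1 N) := by
      apply Set.InjOn.mono ?_ hstrat.2
      intro i hi
      simp only [Finset.coe_Icc, Set.mem_Icc] at hi ⊢
      omega
    calc (tripleCount (fun j => X j ω) (s / (N:ℝ)^α) N : ℝ)
        ≤ (N:ℝ) * (3 * (2 * (s / (N:ℝ)^α) * 2^n + 2))^2 :=
          tripleCount_le (fun j => X j ω) (s / (N:ℝ)^α) hδ0 N n hmem hinj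
      _ ≤ (12*s+6)^2 * (N:ℝ)^((3:ℝ)-α) := numeric_bound hN hα0 hα1 hs h2nN
  by_cases hint : Integrable (fun ω => (tripleCount (fun j => X j ω) (s / (N:ℝ)^α) N : ℝ)) P
  · have h2 : ∫ ω, (tripleCount (fun j => X j ω) (s / (N:ℝ)^α) N : ℝ) ∂P
        ≤ ∫ _ω, (12*s+6)^2 * (N:ℝ)^((3:ℝ)-α) ∂P :=
      integral_mono_ae hint (integrable_const _) hbound
    rwa [integral_const, measureReal_def, measure_univ, ENNReal.toReal_one, one_smul] at h2
  · rw [integral_undef hint]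
    positivity
end
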